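/- arXiv:2308.09703 — 10 statements merged into one kernel-verified Lean document; each statement's English description precedes it below -/
import Mathlib

section
/- Let G be a chordal graph, let X ⊆ V(G) be a clique, and let L₁, …, L_t be the evaporation sequence of G with exception set X. Then for every i ∈ {1,…,t}, every connected component of the induced subgraph G[L_i] is a clique. -/
/-- A graph is chordal if it contains no induced cycle of length at least 4. -/
def IsChordal {V : Type*} (G : SimpleGraph V) : Prop :=
  ∀ n : ℕ, 4 ≤ n → IsEmpty (SimpleGraph.cycleGraph n ↪g G)

/-- The neighborhood of `v` inside the induced subgraph of `G` on the vertex set `R`. -/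
def nbhdIn {V : Type*} (G : SimpleGraph V) (R : Set V) (v : V) : Set V :=
  {u | u ∈ R ∧ G.Adj u v}

/-- `v` is simplicial in the induced subgraph of `G` on `R`:
its neighborhood there is a clique. -/
def SimplicialIn {V : Type*} (G : SimpleGraph V) (R : Set V) (v : V) : Prop :=
  G.IsClique (nbhdIn G R v)

/-- The set of vertices remaining after `n` steps of the evaporation process of `G` with
exception set `X`: at each step all simplicial vertices of the current induced subgraph that
are not in `X` are removed. -/
def evapR {V : Type*} (G : SimpleGraph V) (X : Set V) : ℕ → Set V
  | 0 => Set.univ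
  | n + 1 =>
      evapR G X n \ {v | v ∈ evapR G X n ∧ v ∉ X ∧ SimplicialIn G (evapR G X n) v}

/-- The `i`-th set `L_i` of the evaporation sequence (for `i ≥ 1`): the vertices removed at
step `i` of the evaporation process. -/
def evapLayer {V : Type*} (G : SimpleGraph V) (X : Set V) (i : ℕ) : Set V :=
  evapR G X (i - 1) \ evapR G X i

/-- The evaporation time of `G` with exception set `X`: the length `t` of the evaporation
sequence, i.e. the least `t` with `evapR G X t = X`. -/
noncomputable def evapTime {V : Type*} (G : SimpleGraph V) (X : Set V) : ℕ :=
  sInf {t | evapR G X t = X}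

/-- The evaporation time of a vertex subset `S`: the largest index `i` such that
`L_i ∩ S ≠ ∅`. -/
noncomputable def evapTimeOf {V : Type*} (G : SimpleGraph V) (X S : Set V) : ℕ :=
  sSup {i | (evapLayer G X i ∩ S).Nonempty}

/-- `C` is a connected component of the induced subgraph of `G` on `S`:
a maximal subset of `S` inducing a connected subgraph. -/
def IsCompOf {V : Type*} (G : SimpleGraph V) (S C : Set V) : Prop :=
  C.Nonempty ∧ C ⊆ S ∧ (G.induce C).Connected ∧
    ∀ D, C ⊆ D → D ⊆ S → (G.induce D).Connected → D = C

/-- The open neighborhood `N(S)` of a set of vertices. -/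
def setNbhd {V : Type*} (G : SimpleGraph V) (S : Set V) : Set V :=
  {v | v ∉ S ∧ ∃ u ∈ S, G.Adj u v}

/-- If `G` is a chordal graph, `X ⊆ V(G)` a clique, and `L₁, …, L_t` the
evaporation sequence of `G` with exception set `X`, then for every `i ∈ {1,…,t}`, every
connected component of the induced subgraph `G[L_i]` is a clique. -/
theorem evapLayer_components_cliques {V : Type*} [Fintype V] (G : SimpleGraph V) (X : Set V)
    (hch : IsChordal G) (hX : G.IsClique X) :
    ∀ i, 1 ≤ i → i ≤ evapTime G X →
      ∀ C, IsCompOf G (evapLayer G X i) C → G.IsClique C := by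
  intro i hi _ C hC
  obtain ⟨hCne, hCsub, hconn, _⟩ := hC
  obtain ⟨j, rfl⟩ : ∃ j, i = j + 1 := ⟨i - 1, (Nat.succ_pred_eq_of_pos hi).symm⟩
  have hsimp : ∀ v ∈ C, v ∈ evapR G X j ∧ SimplicialIn G (evapR G X j) v := by
    intro v hv
    have h := hCsub hv
    simp only [evapLayer, Nat.add_sub_cancel] at h
    obtain ⟨h1, h2⟩ := h
    refine ⟨h1, ?_⟩
    by_contra hs
    exact h2 ⟨h1, fun hmem => hs hmem.2.2⟩
  have key : ∀ {u w : C} (_ : (G.induce C).Walk u w), (u : V) = w ∨ G.Adj u w := by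
    intro u w p
    induction p with
    | nil => exact Or.inl rfl
    | @cons a b c hab p ih =>
      have hab' : G.Adj (a : V) (b : V) := hab
      rcases ih with h | h
      · exact Or.inr (h ▸ hab')
      · by_cases hac : (a : V) = (c : V)
        · exact Or.inl hac
        · refine Or.inr ((hsimp b b.2).2 ?_ ?_ hac)
          · exact ⟨(hsimp a a.2).1, hab'⟩
          · exact ⟨(hsimp c c.2).1, h.symm⟩
  intro u hu w hw hne
  obtain ⟨p⟩ := hconn.preconnected ⟨u, hu⟩ ⟨w, hw⟩
  rcases key p with h | h
  · exact absurd h hne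
  · exact h
end

section
/- Let G be a chordal graph, let X ⊆ V(G) be a clique, and let L₁, …, L_t be the evaporation sequence of G with exception set X, with t ≥ 1. If the graph G − X (the induced subgraph on V(G)∖X) is connected, then L_t is a clique. -/
private lemma mem_nbhdIn {V : Type*} {G : SimpleGraph V} {R : Set V} {u v : V}
    (h1 : u ∈ R) (h2 : G.Adj u v) : u ∈ nbhdIn G R v := ⟨h1, h2⟩

private lemma nbhdIn_iff {V : Type*} {G : SimpleGraph V} {R : Set V} {u v : V} :
    u ∈ nbhdIn G R v ↔ u ∈ R ∧ G.Adj u v := Iff.rfl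

private lemma simplicialIn_mono {V : Type*} {G : SimpleGraph V} {S S' : Set V} {v : V}
    (h : S' ⊆ S) (hs : SimplicialIn G S v) : SimplicialIn G S' v := by
  intro x hx y hy hxy
  rw [nbhdIn_iff] at hx hy
  exact hs (mem_nbhdIn (h hx.1) hx.2) (mem_nbhdIn (h hy.1) hy.2) hxy

/-- Removing a simplicial vertex preserves reachability between other vertices. -/
private lemma shortcut {V : Type*} {G : SimpleGraph V} {S : Set V} {v : V}
    (hsimp : SimplicialIn G S v) :
    ∀ n : ℕ, ∀ {a b : V}, a ≠ v → b ≠ v →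
      ∀ p : G.Walk a b, p.length ≤ n → (∀ w ∈ p.support, w ∈ S) →
      ∃ q : G.Walk a b, ∀ w ∈ q.support, w ∈ S \ {v} := by
  intro n
  induction n with
  | zero =>
    intro a b ha _ p hlen hsup
    cases p with
    | nil =>
      refine ⟨.nil, ?_⟩
      intro u hu; simp only [SimpleGraph.Walk.support_nil, List.mem_singleton] at hu
      subst hu; exact ⟨hsup _ (by simp), ha⟩
    | cons h p => simp at hlen
  | succ n ih =>
    intro a b ha hb p hlen hsup
    cases p with
    | nil =>
      refine ⟨.nil, ?_⟩
      intro u hu; simp only [SimpleGraph.Walk.support_nil, List.mem_singleton] at hu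
      subst hu; exact ⟨hsup _ (by simp), ha⟩
    | @cons _ x _ hax p' =>
      by_cases hxv : x = v
      · subst hxv
        cases p' with
        | nil => exact absurd rfl hb
        | @cons _ y _ hvy p'' =>
          have hyS : y ∈ S := hsup y (by simp)
          have haS : a ∈ S := hsup a (by simp)
          by_cases hya : y = a
          · subst hya
            exact ih ha hb p''
              (by simp only [SimpleGraph.Walk.length_cons] at hlen; omega)
              (fun w hw => hsup w (by simp [hw]))
          · have hay : G.Adj a y :=
              hsimp (mem_nbhdIn haS hax) (mem_nbhdIn hyS hvy.symm) (Ne.symm hya)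
            refine ih ha hb (SimpleGraph.Walk.cons hay p'')
              (by simp only [SimpleGraph.Walk.length_cons] at hlen ⊢; omega) ?_
            intro w hw
            simp only [SimpleGraph.Walk.support_cons, List.mem_cons] at hw
            rcases hw with rfl | hw
            · exact haS
            · exact hsup w (by simp [hw])
      · obtain ⟨q, hq⟩ := ih hxv hb p'
          (by simp only [SimpleGraph.Walk.length_cons] at hlen; omega)
          (fun w hw => hsup w (by simp [hw]))
        refine ⟨SimpleGraph.Walk.cons hax q, ?_⟩
        intro w hw
        simp only [SimpleGraph.Walk.support_cons, List.mem_cons] at hw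
        rcases hw with rfl | hw
        · exact ⟨hsup w (by simp), ha⟩
        · exact hq w hw

/-- If all vertices of `S ⊆ R` are simplicial in `R` and two distinct vertices of `S` are
joined by a walk entirely inside `S`, then they are adjacent. -/
private lemma layer_adj {V : Type*} {G : SimpleGraph V} {R S : Set V} (hSR : S ⊆ R)
    (hsimp : ∀ v ∈ S, SimplicialIn G R v) :
    ∀ n : ℕ, ∀ {a b : V}, a ≠ b → ∀ p : G.Walk a b, p.length ≤ n →
      (∀ w ∈ p.support, w ∈ S) → G.Adj a b := by
  intro n
  induction n with
  | zero =>
    intro a b hab p hlen _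
    cases p with
    | nil => exact absurd rfl hab
    | cons h p => simp at hlen
  | succ n ih =>
    intro a b hab p hlen hsup
    cases p with
    | nil => exact absurd rfl hab
    | @cons _ x _ hax p' =>
      cases p' with
      | nil => exact hax
      | @cons _ y _ hxy p'' =>
        have hxS : x ∈ S := hsup x (by simp)
        have haR : a ∈ R := hSR (hsup a (by simp))
        have hyR : y ∈ R := hSR (hsup y (by simp))
        by_cases hay : a = y
        · subst hay
          exact ih hab p''
            (by simp only [SimpleGraph.Walk.length_cons] at hlen; omega)
            (fun w hw => hsup w (by simp [hw]))
        · have h2 : G.Adj a y :=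
            (hsimp x hxS) (show a ∈ nbhdIn G R x from ⟨haR, hax⟩)
              (show y ∈ nbhdIn G R x from ⟨hyR, hxy.symm⟩) hay
          refine ih hab (SimpleGraph.Walk.cons h2 p'')
            (by simp only [SimpleGraph.Walk.length_cons] at hlen ⊢; omega) ?_
          intro w hw
          simp only [SimpleGraph.Walk.support_cons, List.mem_cons] at hw
          rcases hw with rfl | hw
          · exact hsup w (by simp)
          · exact hsup w (by simp [hw])

/-- Removing a finite set of simplicial vertices preserves reachability. -/
private lemma reach_diff {V : Type*} {G : SimpleGraph V} {S : Set V} [DecidableEq V] :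
    ∀ D : Finset V, (∀ v ∈ D, SimplicialIn G S v) → ∀ {a b : V}, a ∉ D → b ∉ D →
      (∃ p : G.Walk a b, ∀ w ∈ p.support, w ∈ S) →
      ∃ q : G.Walk a b, ∀ w ∈ q.support, w ∈ S \ ↑D := by
  intro D
  induction D using Finset.induction with
  | empty =>
    rintro _ a b _ _ ⟨p, hp⟩
    exact ⟨p, fun w hw => ⟨hp w hw, by simp⟩⟩
  | @insert v D hvD ih =>
    intro hD a b haD hbD hreach
    have hav : a ≠ v := fun h => haD (h ▸ Finset.mem_insert_self v D)
    have hbv : b ≠ v := fun h => hbD (h ▸ Finset.mem_insert_self v D)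
    obtain ⟨q, hq⟩ := ih (fun u hu => hD u (Finset.mem_insert_of_mem hu))
      (fun h => haD (Finset.mem_insert_of_mem h))
      (fun h => hbD (Finset.mem_insert_of_mem h)) hreach
    have hsv : SimplicialIn G (S \ ↑D) v :=
      simplicialIn_mono Set.diff_subset (hD v (Finset.mem_insert_self v D))
    obtain ⟨r, hr⟩ := shortcut hsv q.length hav hbv q le_rfl hq
    refine ⟨r, fun w hw => ?_⟩
    obtain ⟨⟨hwS, hwD⟩, hwv⟩ := hr w hw
    refine ⟨hwS, ?_⟩
    simp only [Finset.coe_insert, Set.mem_insert_iff]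
    rintro (h | h)
    · exact hwv h
    · exact hwD h

private lemma evapR_succ_subset {V : Type*} {G : SimpleGraph V} {X : Set V} (n : ℕ) :
    evapR G X (n + 1) ⊆ evapR G X n := Set.diff_subset

/-- Walks avoiding `X` can be pushed down to walks inside `evapR G X n \ X`. -/
private lemma reach_evap {V : Type*} [Fintype V] {G : SimpleGraph V} {X : Set V} :
    ∀ n : ℕ, ∀ {a b : V}, a ∈ evapR G X n \ X → b ∈ evapR G X n \ X →
      (∃ p : G.Walk a b, ∀ w ∈ p.support, w ∉ X) →
      ∃ p : G.Walk a b, ∀ w ∈ p.support, w ∈ evapR G X n \ X := by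
  classical
  intro n
  induction n with
  | zero =>
    rintro a b _ _ ⟨p, hp⟩
    exact ⟨p, fun w hw => ⟨Set.mem_univ w, hp w hw⟩⟩
  | succ n ih =>
    intro a b ha hb hreach
    have ha' : a ∈ evapR G X n \ X := ⟨evapR_succ_subset n ha.1, ha.2⟩
    have hb' : b ∈ evapR G X n \ X := ⟨evapR_succ_subset n hb.1, hb.2⟩
    obtain ⟨p, hp⟩ := ih ha' hb' hreach
    set D := (Set.toFinite (evapR G X n \ evapR G X (n + 1))).toFinset with hDdef
    have hmemD : ∀ v, v ∈ D ↔ v ∈ evapR G X n \ evapR G X (n + 1) := by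
      intro v; rw [hDdef, Set.Finite.mem_toFinset]
    have hD : ∀ v ∈ D, SimplicialIn G (evapR G X n \ X) v := by
      intro v hv
      obtain ⟨hv1, hv2⟩ := (hmemD v).1 hv
      have : v ∈ {u | u ∈ evapR G X n ∧ u ∉ X ∧ SimplicialIn G (evapR G X n) u} := by
        by_contra h
        exact hv2 ⟨hv1, h⟩
      exact simplicialIn_mono Set.diff_subset this.2.2
    have haD : a ∉ D := fun h => ((hmemD a).1 h).2 ha.1
    have hbD : b ∉ D := fun h => ((hmemD b).1 h).2 hb.1
    obtain ⟨q, hq⟩ := reach_diff D hD haD hbD ⟨p, hp⟩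
    refine ⟨q, fun w hw => ?_⟩
    obtain ⟨⟨hw1, hw2⟩, hw3⟩ := hq w hw
    refine ⟨?_, hw2⟩
    by_contra h
    exact hw3 (Finset.mem_coe.2 ((hmemD w).2 ⟨hw1, h⟩))

/-- If `G` is a chordal graph, `X ⊆ V(G)` a clique, `L₁, …, L_t` the
evaporation sequence of `G` with exception set `X` with `t ≥ 1`, and `G − X` is connected,
then `L_t` is a clique. -/
theorem evapLayer_last_clique {V : Type*} [Fintype V] (G : SimpleGraph V) (X : Set V)
    (hch : IsChordal G) (hX : G.IsClique X) (ht : 1 ≤ evapTime G X)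
    (hconn : (G.induce Xᶜ).Connected) :
    G.IsClique (evapLayer G X (evapTime G X)) := by
  classical
  set t := evapTime G X with htdef
  have hTne : {s | evapR G X s = X}.Nonempty := by
    by_contra h
    rw [Set.not_nonempty_iff_eq_empty] at h
    have : evapTime G X = 0 := by rw [evapTime, h, Nat.sInf_empty]
    omega
  have hEt : evapR G X t = X := Nat.sInf_mem hTne
  intro a ha b hb hab
  have ha' : a ∈ evapR G X (t - 1) \ X := ⟨ha.1, fun hx => ha.2 (by rw [hEt]; exact hx)⟩
  have hb' : b ∈ evapR G X (t - 1) \ X := ⟨hb.1, fun hx => hb.2 (by rw [hEt]; exact hx)⟩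
  -- a walk from a to b avoiding X, coming from connectivity of G - X
  have hreach : ∃ p : G.Walk a b, ∀ w ∈ p.support, w ∉ X := by
    obtain ⟨p0⟩ := hconn.preconnected ⟨a, ha'.2⟩ ⟨b, hb'.2⟩
    refine ⟨p0.map (SimpleGraph.Embedding.induce Xᶜ).toHom, ?_⟩
    intro w hw
    replace hw := Eq.mp (congrArg (w ∈ ·) (SimpleGraph.Walk.support_map _ p0)) hw
    rw [List.mem_map] at hw
    obtain ⟨x, _, rfl⟩ := hw
    exact x.2
  obtain ⟨p, hp⟩ := reach_evap (t - 1) ha' hb' hreach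
  have hsucc : t - 1 + 1 = t := Nat.succ_pred_eq_of_pos ht
  refine layer_adj (R := evapR G X (t - 1)) Set.diff_subset ?_ p.length hab p le_rfl hp
  intro v hv
  have hvt : v ∉ evapR G X t := fun h => hv.2 (by rw [← hEt]; exact h)
  rw [← hsucc] at hvt
  have : v ∈ {u | u ∈ evapR G X (t - 1) ∧ u ∉ X ∧ SimplicialIn G (evapR G X (t - 1)) u} := by
    by_contra h
    exact hvt ⟨hv.1, h⟩
  exact this.2.2
end

section
/- Let G be a chordal graph, let X ⊆ V(G) be a clique, and let L₁, …, L_t be the evaporation sequence of G with exception set X. For i ∈ {1,…,t} let G_i denote the induced subgraph G − (L₁ ∪ … ∪ L_{i−1}). Let i ∈ {1,…,t}, let C be a connected component of G[L_i], and let u, v ∈ C. Then N_{G_i}(u)∖{v} = N_{G_i}(v)∖{u}, where N_{G_i}(w) denotes the neighborhood of w in G_i. -/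
lemma closed_nbhd_eq_of_adj {V : Type*} (G : SimpleGraph V) (R : Set V) (u v : V)
    (hu : u ∈ R) (hv : v ∈ R) (huv : G.Adj u v)
    (hsu : SimplicialIn G R u) (hsv : SimplicialIn G R v) :
    nbhdIn G R u ∪ {u} = nbhdIn G R v ∪ {v} := by
  have key : ∀ a b : V, a ∈ R → b ∈ R → G.Adj a b → SimplicialIn G R a →
      nbhdIn G R a ∪ {a} ⊆ nbhdIn G R b ∪ {b} := by
    intro a b ha hb hab hsa w hw
    rcases hw with hw | hw
    · by_cases hwb : w = b
      · exact Or.inr hwb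
      · obtain ⟨hwR, hwa⟩ := hw
        have hbn : b ∈ nbhdIn G R a := ⟨hb, hab.symm⟩
        exact Or.inl ⟨hwR, hsa ⟨hwR, hwa⟩ hbn hwb⟩
    · rw [Set.mem_singleton_iff] at hw
      subst hw
      exact Or.inl ⟨ha, hab⟩
  exact Set.Subset.antisymm (key u v hu hv huv hsu) (key v u hv hu huv.symm hsv)

/-- Let `G` be chordal, `X` a clique, `L₁, …, L_t` the evaporation sequence
of `G` with exception set `X`, and `G_i = G − (L₁ ∪ ⋯ ∪ L_{i-1})` (whose vertex set is
`evapR G X (i-1)`). If `i ∈ {1,…,t}`, `C` is a connected component of `G[L_i]`, and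
`u, v ∈ C`, then `N_{G_i}(u) ∖ {v} = N_{G_i}(v) ∖ {u}`. -/
theorem evapLayer_component_neighborhoods {V : Type*} [Fintype V] (G : SimpleGraph V)
    (X : Set V) (hch : IsChordal G) (hX : G.IsClique X)
    (i : ℕ) (hi1 : 1 ≤ i) (hit : i ≤ evapTime G X)
    (C : Set V) (hC : IsCompOf G (evapLayer G X i) C) (u v : V) (hu : u ∈ C) (hv : v ∈ C) :
    nbhdIn G (evapR G X (i - 1)) u \ {v} = nbhdIn G (evapR G X (i - 1)) v \ {u} := by
  -- Every vertex of the layer is in `R := evapR G X (i-1)` and simplicial there.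
  set R := evapR G X (i - 1) with hR
  have hiz : i - 1 + 1 = i := Nat.succ_pred_eq_of_pos hi1
  have hmem : ∀ w ∈ C, w ∈ R ∧ SimplicialIn G R w := by
    intro w hw
    have hwL : w ∈ evapLayer G X i := hC.2.1 hw
    obtain ⟨hwR, hwN⟩ := hwL
    refine ⟨hwR, ?_⟩
    by_contra hns
    apply hwN
    rw [← hiz]
    show w ∈ evapR G X (i-1) \ _
    refine ⟨hwR, ?_⟩
    intro hmem
    exact hns hmem.2.2
  -- Closed neighborhoods agree across the connected component.
  have hreach : ∀ a b : C, (G.induce C).Reachable a b := by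
    intro a b
    exact hC.2.2.1 a b
  have hwalk : ∀ a b : C, nbhdIn G R (a : V) ∪ {(a : V)} = nbhdIn G R (b : V) ∪ {(b : V)} := by
    intro a b
    obtain ⟨p⟩ := hreach a b
    induction p with
    | nil => rfl
    | cons h p ih =>
      rename_i x y z
      have hxy : G.Adj (x : V) (y : V) := h
      have hx := hmem x x.2
      have hy := hmem y y.2
      exact (closed_nbhd_eq_of_adj G R x y hx.1 hy.1 hxy hx.2 hy.2).trans ih
  have hM : nbhdIn G R u ∪ {u} = nbhdIn G R v ∪ {v} := hwalk ⟨u, hu⟩ ⟨v, hv⟩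
  -- Deduce the statement about open neighborhoods.
  ext w
  simp only [Set.mem_diff, Set.mem_singleton_iff]
  constructor
  · rintro ⟨⟨hwR, hwu⟩, hwv⟩
    have hwm : w ∈ nbhdIn G R v ∪ {v} := hM ▸ (Or.inl ⟨hwR, hwu⟩)
    rcases hwm with hwm | hwm
    · exact ⟨hwm, fun h => G.loopless.irrefl u (h ▸ hwu)⟩
    · exact absurd hwm hwv
  · rintro ⟨⟨hwR, hwv⟩, hwu⟩
    have hwm : w ∈ nbhdIn G R u ∪ {u} := hM ▸ (Or.inl ⟨hwR, hwv⟩)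
    rcases hwm with hwm | hwm
    · exact ⟨hwm, fun h => G.loopless.irrefl v (h ▸ hwv)⟩
    · exact absurd hwm hwu
end

section
/- Let G be a chordal graph, let X ⊆ V(G) be a clique, and let L₁, …, L_t be the evaporation sequence of G with exception set X, with t ≥ 1. Let C = V(G)∖X. If G − X is connected, then N(C) = N(L_t) ∩ X, where N(S) denotes the open neighborhood of a vertex set S in G. -/
section Aux
variable {V : Type*} (G : SimpleGraph V) (X : Set V)

lemma X_subset_evapR (n : ℕ) : X ⊆ evapR G X n := by
  induction n with
  | zero => simp [evapR]
  | succ n ih => exact fun v hv => ⟨ih hv, fun h => h.2.1 hv⟩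

lemma evapR_antitone : Antitone (evapR G X) := by
  apply antitone_nat_of_succ_le
  intro n v hv
  exact hv.1

noncomputable def lay (v : V) : ℕ := sInf {i | v ∉ evapR G X i}

variable {T : ℕ} (hT : evapR G X T = X) {v : V} (hv : v ∉ X)

include hT hv in
lemma lay_nonempty : {i | v ∉ evapR G X i}.Nonempty := ⟨T, by rw [Set.mem_setOf_eq, hT]; exact hv⟩

include hT hv in
lemma notMem_evapR_lay : v ∉ evapR G X (lay G X v) := Nat.sInf_mem (lay_nonempty G X hT hv)

include hT hv in
lemma mem_evapR_iff {n : ℕ} : v ∈ evapR G X n ↔ n < lay G X v := by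
  constructor
  · intro h
    by_contra hn
    push_neg at hn
    exact notMem_evapR_lay G X hT hv (evapR_antitone G X hn h)
  · intro h
    by_contra hmem
    exact Nat.notMem_of_lt_sInf h hmem

include hT hv in
lemma lay_pos : 0 < lay G X v := by
  have : v ∈ evapR G X 0 := by simp [evapR]
  exact (mem_evapR_iff G X hT hv).mp this

include hT hv in
lemma lay_le_T : lay G X v ≤ T := Nat.sInf_le (by rw [Set.mem_setOf_eq, hT]; exact hv)

include hT hv in
lemma clique_at_lay {a b : V}
    (ha : a ∈ evapR G X (lay G X v - 1)) (hb : b ∈ evapR G X (lay G X v - 1))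
    (hav : G.Adj a v) (hbv : G.Adj b v) (hab : a ≠ b) : G.Adj a b := by
  set i := lay G X v with hi
  have hi1 : 1 ≤ i := lay_pos G X hT hv
  have hvmem : v ∈ evapR G X (i - 1) := (mem_evapR_iff G X hT hv).mpr (by omega)
  have hvnot : v ∉ evapR G X i := notMem_evapR_lay G X hT hv
  have hstep : evapR G X i = evapR G X (i - 1) \
      {u | u ∈ evapR G X (i-1) ∧ u ∉ X ∧ SimplicialIn G (evapR G X (i-1)) u} := by
    conv_lhs => rw [show i = (i - 1) + 1 by omega, evapR]
  have hsimp : SimplicialIn G (evapR G X (i-1)) v := by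
    rw [hstep] at hvnot
    by_contra hns
    exact hvnot ⟨hvmem, fun hmem => hns hmem.2.2⟩
  exact hsimp ⟨ha, hav⟩ ⟨hb, hbv⟩ hab

omit hv

include hT in
lemma walk_push (x : V) (hx : x ∈ X) (m : ℕ) :
    ∀ k (p : ℕ → V), G.Adj x (p 0) → (∀ j, j < k → G.Adj (p j) (p (j+1))) →
      (∀ j, j ≤ k → p j ∉ X) → m < lay G X (p k) →
      ∃ y, y ∉ X ∧ G.Adj y x ∧ m < lay G X y := by
  intro k
  induction k using Nat.strong_induction_on with
  | _ k IH =>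
    intro p hx0 hadj hnX hlast
    rcases Nat.eq_zero_or_pos k with hk | hk
    · subst hk
      exact ⟨p 0, hnX 0 le_rfl, hx0.symm, hlast⟩
    by_cases hint : ∃ j, j < k ∧ m < lay G X (p j)
    · obtain ⟨j, hj, hmj⟩ := hint
      exact IH j hj p hx0 (fun j' h => hadj j' (h.trans hj))
        (fun j' h => hnX j' (h.trans hj.le)) hmj
    push_neg at hint
    obtain ⟨j₀, hj₀mem, hmin⟩ := Finset.exists_min_image (Finset.range k)
      (fun j => lay G X (p j)) ⟨0, Finset.mem_range.mpr hk⟩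
    rw [Finset.mem_range] at hj₀mem
    have hmin' : ∀ j, j < k → lay G X (p j₀) ≤ lay G X (p j) :=
      fun j hj => hmin j (Finset.mem_range.mpr hj)
    have hj₀X : p j₀ ∉ X := hnX j₀ hj₀mem.le
    have him : lay G X (p j₀) ≤ m := hint j₀ hj₀mem
    have hi1 : 1 ≤ lay G X (p j₀) := lay_pos G X hT hj₀X
    have hbX : p (j₀ + 1) ∉ X := hnX _ hj₀mem
    have hbmem : p (j₀ + 1) ∈ evapR G X (lay G X (p j₀) - 1) := by
      apply (mem_evapR_iff G X hT hbX).mpr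
      rcases eq_or_lt_of_le (Nat.succ_le_of_lt hj₀mem) with he | hlt
      · have h' : m < lay G X (p (j₀+1)) := by rw [show j₀ + 1 = k from he]; exact hlast
        omega
      · have := hmin' (j₀+1) hlt; omega
    have hvb : G.Adj (p (j₀ + 1)) (p j₀) := (hadj j₀ hj₀mem).symm
    by_cases h0 : j₀ = 0
    · subst h0
      have hamem : x ∈ evapR G X (lay G X (p 0) - 1) := X_subset_evapR G X _ hx
      have hab : x ≠ p 1 := fun h => hbX (h ▸ hx)
      have hxb : G.Adj x (p 1) :=
        clique_at_lay G X hT hj₀X hamem hbmem hx0 hvb hab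
      apply IH (k-1) (by omega) (fun j => p (j+1)) hxb
        (fun j hj => hadj (j+1) (by omega)) (fun j hj => hnX (j+1) (by omega))
      rw [show k - 1 + 1 = k by omega]; exact hlast
    · have h1k : j₀ - 1 < k := by omega
      have haX : p (j₀ - 1) ∉ X := hnX _ h1k.le
      have hamem : p (j₀ - 1) ∈ evapR G X (lay G X (p j₀) - 1) := by
        have := hmin' (j₀ - 1) h1k
        exact (mem_evapR_iff G X hT haX).mpr (by omega)
      have hva : G.Adj (p (j₀ - 1)) (p j₀) := by
        have := hadj (j₀ - 1) (by omega)
        rwa [show j₀ - 1 + 1 = j₀ by omega] at this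
      by_cases hab : p (j₀ - 1) = p (j₀ + 1)
      · have hj₀k : j₀ + 1 < k := by
          by_contra h
          have he : j₀ + 1 = k := by omega
          have h1 : lay G X (p (j₀ - 1)) ≤ m := hint _ h1k
          rw [hab, he] at h1
          omega
        apply IH (k-2) (by omega) (fun j => if j < j₀ then p j else p (j+2))
        · rw [if_pos (by omega : 0 < j₀)]; exact hx0
        · intro j hj
          rcases lt_trichotomy (j+1) j₀ with h | h | h
          · rw [if_pos (by omega : j < j₀), if_pos h]; exact hadj j (by omega)
          · rw [if_pos (by omega : j < j₀), if_neg (by omega : ¬ (j+1) < j₀),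
              show j = j₀ - 1 by omega, show j₀ - 1 + 1 + 2 = j₀ + 2 by omega, hab]
            exact hadj (j₀+1) hj₀k
          · rw [if_neg (by omega : ¬ j < j₀), if_neg (by omega : ¬ (j+1) < j₀)]
            exact hadj (j+2) (by omega)
        · intro j hj
          by_cases h : j < j₀
          · rw [if_pos h]; exact hnX j (by omega)
          · rw [if_neg h]; exact hnX (j+2) (by omega)
        · rw [if_neg (by omega : ¬ (k-2) < j₀), show k - 2 + 2 = k by omega]
          exact hlast
      · have hadjab : G.Adj (p (j₀ - 1)) (p (j₀ + 1)) :=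
          clique_at_lay G X hT hj₀X hamem hbmem hva hvb hab
        apply IH (k-1) (by omega) (fun j => if j < j₀ then p j else p (j+1))
        · rw [if_pos (by omega : 0 < j₀)]; exact hx0
        · intro j hj
          rcases lt_trichotomy (j+1) j₀ with h | h | h
          · rw [if_pos (by omega : j < j₀), if_pos h]; exact hadj j (by omega)
          · rw [if_pos (by omega : j < j₀), if_neg (by omega : ¬ (j+1) < j₀),
              show j = j₀ - 1 by omega, show j₀ - 1 + 1 + 1 = j₀ + 1 by omega]
            exact hadjab
          · rw [if_neg (by omega : ¬ j < j₀), if_neg (by omega : ¬ (j+1) < j₀)]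
            exact hadj (j+1) (by omega)
        · intro j hj
          by_cases h : j < j₀
          · rw [if_pos h]; exact hnX j (by omega)
          · rw [if_neg h]; exact hnX (j+1) (by omega)
        · rw [if_neg (by omega : ¬ (k-1) < j₀), show k - 1 + 1 = k by omega]
          exact hlast

end Aux

/-- Let `G` be chordal, `X` a clique, `L₁, …, L_t` the evaporation sequence
of `G` with exception set `X`, with `t ≥ 1`, and let `C = V(G) ∖ X`. If `G − X` is connected,
then `N(C) = N(L_t) ∩ X`. -/


theorem setNbhd_compl_eq {V : Type*} [Fintype V] (G : SimpleGraph V) (X : Set V)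
    (hch : IsChordal G) (hX : G.IsClique X) (ht : 1 ≤ evapTime G X)
    (hconn : (G.induce Xᶜ).Connected) :
    setNbhd G Xᶜ = setNbhd G (evapLayer G X (evapTime G X)) ∩ X := by
  have hne : {t | evapR G X t = X}.Nonempty := by
    by_contra h
    rw [Set.not_nonempty_iff_eq_empty] at h
    have : evapTime G X = 0 := by rw [evapTime, h, Nat.sInf_empty]
    omega
  set T := evapTime G X with hTdef
  have hT : evapR G X T = X := Nat.sInf_mem hne
  ext x
  simp only [Set.mem_inter_iff, setNbhd, Set.mem_setOf_eq, Set.mem_compl_iff, not_not]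
  constructor
  · rintro ⟨hxX, u, huC, hux⟩
    -- define m
    set S : Set ℕ := {i | ∃ u, u ∉ X ∧ G.Adj u x ∧ lay G X u = i} with hSdef
    have hSne : S.Nonempty := ⟨lay G X u, u, huC, hux, rfl⟩
    have hSbdd : BddAbove S := by
      refine ⟨T, fun i hi => ?_⟩
      obtain ⟨v, hvX, _, hlv⟩ := hi
      rw [← hlv]
      exact lay_le_T G X hT hvX
    set m := sSup S with hmdef
    obtain ⟨u₀, hu₀X, hu₀x, hu₀lay⟩ := Nat.sSup_mem hSne hSbdd
    have hmT : m ≤ T := by rw [hmdef, ← hu₀lay]; exact lay_le_T G X hT hu₀X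
    by_cases hmt : m = T
    · refine ⟨⟨?_, u₀, ⟨?_, ?_⟩, hu₀x⟩, hxX⟩
      · rintro ⟨-, hx2⟩
        exact hx2 (by rw [hT]; exact hxX)
      · exact (mem_evapR_iff G X hT hu₀X).mpr (by omega)
      · intro hmem
        have := (mem_evapR_iff G X hT hu₀X).mp hmem
        omega
    · exfalso
      have hmlt : m < T := lt_of_le_of_ne hmT hmt
      have hnsub : ¬ evapR G X m ⊆ X := by
        intro hsub
        have heq : evapR G X m = X := le_antisymm hsub (X_subset_evapR G X m)
        have : T ≤ m := Nat.sInf_le heq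
        omega
      obtain ⟨w, hwm, hwX⟩ := Set.not_subset.mp hnsub
      have hwlay : m < lay G X w := (mem_evapR_iff G X hT hwX).mp hwm
      have hu₀C : u₀ ∈ (Xᶜ : Set V) := hu₀X
      have hwC : w ∈ (Xᶜ : Set V) := hwX
      obtain ⟨W⟩ := hconn.preconnected ⟨u₀, hu₀C⟩ ⟨w, hwC⟩
      have hwalk := walk_push G X hT x hxX m W.length (fun j => (W.getVert j : V))
        (by simp only [SimpleGraph.Walk.getVert_zero]; exact hu₀x.symm)
        (fun j hj => W.adj_getVert_succ hj)
        (fun j _ => (W.getVert j).2)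
        (by simp only [SimpleGraph.Walk.getVert_length]; exact hwlay)
      obtain ⟨y, hyX, hyx, hym⟩ := hwalk
      have : lay G X y ≤ m := le_csSup hSbdd ⟨y, hyX, hyx, rfl⟩
      omega
  · rintro ⟨⟨hxL, u, huL, hux⟩, hxX⟩
    refine ⟨hxX, u, ?_, hux⟩
    intro huX
    exact huL.2 (by rw [hT]; exact huX)
end

section
/- Suppose G is a connected chordal graph that contains a clique X, and suppose C is a connected component of G − X. Then the evaporation time of the vertex set C in G with exception set X is equal to the length of the evaporation sequence of the induced subgraph G[X ∪ C] with exception set X. -/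
namespace EvapAux

variable {V : Type*} {G : SimpleGraph V} {W : Set V} {a b c u w x y : V}

/-- One step of a walk inside the vertex set `W`. -/
def Step (G : SimpleGraph V) (W : Set V) (u v : V) : Prop := u ∈ W ∧ v ∈ W ∧ G.Adj u v

lemma step_symm : Symmetric (Step G W) := fun _ _ ⟨h1, h2, h3⟩ => ⟨h2, h1, h3.symm⟩

/-- Reachability inside the vertex set `W`. -/
def ReachIn (G : SimpleGraph V) (W : Set V) (a b : V) : Prop :=
  a ∈ W ∧ Relation.ReflTransGen (Step G W) a b

lemma ReachIn.refl (ha : a ∈ W) : ReachIn G W a a := ⟨ha, .refl⟩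

lemma ReachIn.mem_left (h : ReachIn G W a b) : a ∈ W := h.1

lemma ReachIn.mem_right (h : ReachIn G W a b) : b ∈ W := by
  obtain ⟨ha, h⟩ := h
  induction h with
  | refl => exact ha
  | tail _ h _ => exact h.2.1

lemma ReachIn.trans (h : ReachIn G W a b) (h' : ReachIn G W b c) : ReachIn G W a c :=
  ⟨h.1, h.2.trans h'.2⟩

lemma ReachIn.symm (h : ReachIn G W a b) : ReachIn G W b a :=
  ⟨h.mem_right, (by haveI : Std.Symm (Step G W) := ⟨fun _ _ h => step_symm h⟩; exact Std.Symm.symm _ _ h.2)⟩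

lemma ReachIn.tail (h : ReachIn G W a b) (hc : c ∈ W) (hadj : G.Adj b c) : ReachIn G W a c :=
  ⟨h.1, h.2.tail ⟨h.mem_right, hc, hadj⟩⟩

lemma ReachIn.mono {W' : Set V} (hW : W ⊆ W') (h : ReachIn G W a b) : ReachIn G W' a b :=
  ⟨hW h.1, Relation.ReflTransGen.mono (fun _ _ ⟨h1, h2, h3⟩ => ⟨hW h1, hW h2, h3⟩) _ _ h.2⟩

/-- a reach-in stays inside the reachability set of `a`. -/
lemma ReachIn.within_reachSet (hu : ReachIn G W a u) (h : ReachIn G W u w) :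
    ReachIn G {v | ReachIn G W a v} u w := by
  obtain ⟨huW, h⟩ := h
  induction h with
  | refl => exact .refl hu
  | @tail c d hrtg hstep ih =>
      exact ih.tail (hu.trans ⟨huW, hrtg.tail hstep⟩) hstep.2.2

/-- A walk from `x` to `y` inside `W`, encoded as a list. -/
def GoodChain (G : SimpleGraph V) (W : Set V) (x y : V) (l : List V) : Prop :=
  l.Chain' G.Adj ∧ (∀ v ∈ l, v ∈ W) ∧ l.head? = some x ∧ l.getLast? = some y

lemma GoodChain.length_pos {l : List V} (h : GoodChain G W x y l) : 0 < l.length := by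
  rcases l with - | ⟨u, l⟩
  · simp [GoodChain] at h
  · simp

lemma GoodChain.getElem_zero {l : List V} (h : GoodChain G W x y l) :
    l[0]'h.length_pos = x := by
  rcases l with - | ⟨u, l⟩
  · simp [GoodChain] at h
  · have := h.2.2.1
    simp only [List.head?_cons, Option.some.injEq] at this
    simpa using this

lemma GoodChain.getElem_last {l : List V} (h : GoodChain G W x y l) :
    l[l.length - 1]'(by have := h.length_pos; omega) = y := by
  have h2 := h.2.2.2
  have := h.length_pos
  rw [List.getLast?_eq_getElem?, List.getElem?_eq_getElem (by omega)] at h2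
  simpa using h2

lemma GoodChain.mem_left {l : List V} (h : GoodChain G W x y l) : x ∈ l :=
  h.getElem_zero ▸ List.getElem_mem _

lemma GoodChain.mem_right {l : List V} (h : GoodChain G W x y l) : y ∈ l :=
  h.getElem_last ▸ List.getElem_mem _

lemma mem_of_chain_step {l : List V} (h : List.Chain (Step G W) a l) : ∀ v ∈ l, v ∈ W := by
  induction l generalizing a with
  | nil => simp
  | cons b t ih =>
      rw [List.Chain, List.isChain_cons_cons] at h
      intro v hv
      rcases List.mem_cons.1 hv with rfl | hv
      · exact h.1.2.1
      · exact ih h.2 v hv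

lemma getLast?_drop_of_lt {l : List V} {q : ℕ} (hq : q < l.length) :
    (l.drop q).getLast? = l.getLast? := by
  rw [List.getLast?_eq_getElem?, List.getLast?_eq_getElem?, List.getElem?_drop]
  congr 1
  simp
  omega

lemma reachIn_iff_goodChain : ReachIn G W a b ↔ ∃ l, GoodChain G W a b l := by
  constructor
  · rintro ⟨ha, h⟩
    obtain ⟨l, hl, hlast⟩ := List.exists_isChain_cons_of_relationReflTransGen h
    refine ⟨a :: l, hl.imp fun u v h => h.2.2, ?_, rfl, ?_⟩
    · intro v hv
      rcases List.mem_cons.1 hv with rfl | hv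
      · exact ha
      · exact mem_of_chain_step hl v hv
    · rw [List.getLast?_eq_getLast (List.cons_ne_nil _ _), hlast]
  · rintro ⟨l, hl⟩
    induction l generalizing a with
    | nil => simp [GoodChain] at hl
    | cons u t ih =>
        obtain ⟨hchain, hmem, hhead, hlast⟩ := hl
        simp only [List.head?_cons, Option.some.injEq] at hhead
        subst hhead
        rcases t with - | ⟨v, t'⟩
        · simp only [List.getLast?_singleton, Option.some.injEq] at hlast
          subst hlast
          exact .refl (hmem _ (by simp))
        · rw [List.Chain', List.isChain_cons_cons] at hchain
          have hrec : ReachIn G W v b := by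
            refine ih ⟨hchain.2, fun z hz => hmem z (List.mem_cons_of_mem _ hz), rfl, ?_⟩
            rw [← hlast, List.getLast?_cons_cons]
          exact ⟨hmem _ (by simp), Relation.ReflTransGen.head
            ⟨hmem _ (by simp), hmem _ (by simp), hchain.1⟩ hrec.2⟩

lemma GoodChain.drop {l : List V} (h : GoodChain G W x y l) {j : ℕ} (hj : j < l.length)
    (hx : l[j] = x) : GoodChain G W x y (l.drop j) := by
  refine ⟨h.1.drop j, fun v hv => h.2.1 v (List.drop_subset _ _ hv), ?_, ?_⟩
  · rw [List.head?_drop, List.getElem?_eq_getElem hj, hx]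
  · rw [getLast?_drop_of_lt hj]; exact h.2.2.2

lemma GoodChain.splice {l : List V} (h : GoodChain G W x y l) {p q : ℕ} (hp : 0 < p)
    (hpq : p ≤ q) (hq : q < l.length)
    (hjoin : G.Adj (l[p - 1]'(by omega)) l[q]) :
    GoodChain G W x y (l.take p ++ l.drop q) := by
  have hq' : 0 < l.length := by omega
  have htklen : (l.take p).length = p := by simp; omega
  have hlast_take : (l.take p).getLast? = some (l[p - 1]'(by omega)) := by
    rw [List.getLast?_eq_getElem?]
    simp only [htklen]
    rw [List.getElem?_take, if_pos (by omega),
      List.getElem?_eq_getElem (by omega)]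
  have hhead_drop : (l.drop q).head? = some l[q] := by
    rw [List.head?_drop, List.getElem?_eq_getElem hq]
  refine ⟨?_, ?_, ?_, ?_⟩
  · rw [List.Chain', List.isChain_append]
    refine ⟨h.1.take p, h.1.drop q, ?_⟩
    intro u hu v hv
    rw [hlast_take] at hu; rw [hhead_drop] at hv
    simp only [Option.mem_def, Option.some.injEq] at hu hv
    rw [← hu, ← hv]; exact hjoin
  · intro v hv
    rcases List.mem_append.1 hv with hv | hv
    · exact h.2.1 v (List.take_subset _ _ hv)
    · exact h.2.1 v (List.drop_subset _ _ hv)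
  · rw [List.head?_append]
    have : (l.take p).head? = some x := by
      rw [List.head?_eq_getElem?, List.getElem?_take, if_pos hp,
        List.getElem?_eq_getElem hq', h.getElem_zero]
    rw [this]; rfl
  · rw [List.getLast?_append_of_ne_nil _ (by simp; omega), getLast?_drop_of_lt hq]
    exact h.2.2.2


lemma exists_minimal_goodChain (hex : ∃ l, GoodChain G W x y l) :
    ∃ l, GoodChain G W x y l ∧ l.Nodup ∧
      ∀ i j (hi : i < l.length) (hj : j < l.length), G.Adj l[i] l[j] →
        i = j + 1 ∨ j = i + 1 := by
  classical
  set s : Set ℕ := {n | ∃ l, GoodChain G W x y l ∧ l.length = n} with hs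
  have hsne : s.Nonempty := by obtain ⟨l, hl⟩ := hex; exact ⟨l.length, l, hl, rfl⟩
  obtain ⟨l, hl, hlen⟩ := Nat.sInf_mem hsne
  have hmin : ∀ l', GoodChain G W x y l' → l.length ≤ l'.length := by
    intro l' hl'
    rw [hlen]
    exact Nat.sInf_le ⟨l', hl', rfl⟩
  -- key splice-minimality facts
  have key : ∀ i j (hi : i < l.length) (hj : j < l.length), i + 1 < j →
      ¬ G.Adj l[i] l[j] := by
    intro i j hi hj hij hadj
    have hgc := hl.splice (p := i + 1) (q := j) (by omega) (by omega) hj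
      (by simpa using hadj)
    have := hmin _ hgc
    rw [List.length_append, List.length_take, List.length_drop] at this
    omega
  have hnd : l.Nodup := by
    rw [List.nodup_iff_injective_getElem]
    intro ⟨i, hi⟩ ⟨j, hj⟩ hij
    simp only at hij
    by_contra hne
    have hne' : i ≠ j := by simpa using hne
    -- wlog i < j
    rcases Nat.lt_or_ge i j with hlt | hge
    · rcases Nat.eq_zero_or_pos i with rfl | hipos
      · have hgc := hl.drop hj (by rw [← hij]; exact hl.getElem_zero)
        have := hmin _ hgc
        rw [List.length_drop] at this
        omega
      · have hjoin : G.Adj (l[i-1]'(by omega)) l[j] := by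
          rw [← hij]
          have := List.isChain_iff_getElem.1 hl.1 (i-1) (by omega)
          have heq : i - 1 + 1 = i := by omega
          simp only [heq] at this
          exact this
        have hgc := hl.splice (p := i) (q := j) hipos (by omega) hj hjoin
        have := hmin _ hgc
        rw [List.length_append, List.length_take, List.length_drop] at this
        omega
    · -- symmetric: j < i
      have hlt : j < i := by omega
      rcases Nat.eq_zero_or_pos j with rfl | hjpos
      · have hgc := hl.drop hi (by rw [hij]; exact hl.getElem_zero)
        have := hmin _ hgc
        rw [List.length_drop] at this
        omega
      · have hjoin : G.Adj (l[j-1]'(by omega)) l[i] := by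
          rw [hij]
          have := List.isChain_iff_getElem.1 hl.1 (j-1) (by omega)
          have heq : j - 1 + 1 = j := by omega
          simp only [heq] at this
          exact this
        have hgc := hl.splice (p := j) (q := i) hjpos (by omega) hi hjoin
        have := hmin _ hgc
        rw [List.length_append, List.length_take, List.length_drop] at this
        omega
  refine ⟨l, hl, hnd, ?_⟩
  intro i j hi hj hadj
  by_contra hcon
  push_neg at hcon
  have hne : i ≠ j := by rintro rfl; exact G.irrefl hadj
  rcases Nat.lt_or_ge i j with hlt | hge
  · exact key i j hi hj (by omega) hadj
  · exact key j i hj hi (by omega) hadj.symm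


lemma getD_eq_getElem' {l : List V} {i : ℕ} (h : i < l.length) (d : V) :
    l.getD i d = l[i] := by
  rw [List.getD_eq_getElem?_getD, List.getElem?_eq_getElem h]; rfl

lemma nat_mod_helper {n a b : ℕ} (hn : 2 ≤ n) (ha : a < n) (hb : b < n) :
    (n - b + a) % n = 1 ↔ (a = b + 1 ∨ (b = n - 1 ∧ a = 0)) := by
  rcases Nat.lt_or_ge (n - b + a) n with h | h
  · rw [Nat.mod_eq_of_lt h]; omega
  · have h2 : n - b + a - n < n := by omega
    rw [Nat.mod_eq_sub_mod h, Nat.mod_eq_of_lt h2]; omega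

lemma cycleGraph_adj_iff {n : ℕ} (hn : 2 ≤ n) (u v : Fin n) :
    (SimpleGraph.cycleGraph n).Adj u v ↔
      (u.val + 1 = v.val ∨ v.val + 1 = u.val ∨
        (u.val = 0 ∧ v.val = n - 1) ∨ (v.val = 0 ∧ u.val = n - 1)) := by
  rw [SimpleGraph.cycleGraph_adj']
  obtain ⟨a, ha⟩ := u; obtain ⟨b, hb⟩ := v
  rw [Fin.sub_def, Fin.sub_def]
  simp only
  rw [nat_mod_helper hn ha hb, nat_mod_helper hn hb ha]
  omega

/-- Extract indexed path data from a minimal good chain. -/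
lemma exists_path_data (hex : ∃ l, GoodChain G W x y l) :
    ∃ (m : ℕ) (f : ℕ → V), 0 < m ∧ f 0 = x ∧ f (m - 1) = y ∧
      (∀ k, k < m → f k ∈ W) ∧
      (∀ i j, i < m → j < m → f i = f j → i = j) ∧
      (∀ k, k + 1 < m → G.Adj (f k) (f (k + 1))) ∧
      (∀ i j, i < m → j < m → G.Adj (f i) (f j) → i = j + 1 ∨ j = i + 1) := by
  obtain ⟨l, hl, hnd, hchord⟩ := exists_minimal_goodChain hex
  have hpos := hl.length_pos
  refine ⟨l.length, fun k => l.getD k x, hpos, ?_, ?_, ?_, ?_, ?_, ?_⟩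
  · show l.getD 0 x = x
    rw [getD_eq_getElem' hpos x]; exact hl.getElem_zero
  · show l.getD (l.length - 1) x = y
    rw [getD_eq_getElem' (by omega) x]; exact hl.getElem_last
  · intro k hk
    show l.getD k x ∈ W
    rw [getD_eq_getElem' hk x]
    exact hl.2.1 _ (List.getElem_mem _)
  · intro i j hi hj hij
    have hij' : l[i] = l[j] := by
      rw [← getD_eq_getElem' hi x, ← getD_eq_getElem' hj x]; exact hij
    have := List.nodup_iff_injective_getElem.1 hnd (a₁ := ⟨i, hi⟩) (a₂ := ⟨j, hj⟩) hij'
    simpa using this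
  · intro k hk
    show G.Adj (l.getD k x) (l.getD (k + 1) x)
    rw [getD_eq_getElem' (by omega) x, getD_eq_getElem' hk x]
    have := List.isChain_iff_getElem.1 hl.1 k (by omega)
    simpa using this
  · intro i j hi hj hadj
    have hadj' : G.Adj l[i] l[j] := by
      rw [← getD_eq_getElem' hi x, ← getD_eq_getElem' hj x]; exact hadj
    exact hchord i j hi hj hadj' 

/-- Gluing two induced paths into an induced cycle: contradiction with chordality. -/
lemma no_two_disjoint_paths (hch : ∀ n : ℕ, 4 ≤ n → IsEmpty (SimpleGraph.cycleGraph n ↪g G))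
    (hxy : x ≠ y) (hnadj : ¬ G.Adj x y) {WA WB : Set V}
    (hdisj : ∀ v, v ∈ WA → v ∈ WB → v = x ∨ v = y)
    (hnon : ∀ u w, u ∈ WA → w ∈ WB → u ≠ x → u ≠ y → w ≠ x → w ≠ y → ¬ G.Adj u w)
    (hA : ∃ l, GoodChain G WA x y l) (hB : ∃ l, GoodChain G WB x y l) : False := by
  classical
  obtain ⟨nA, fA, hposA, hA0, hAL, hmemA, hinjA, hchainA, hchordA⟩ := exists_path_data hA
  obtain ⟨nB, fB, hposB, hB0, hBL, hmemB, hinjB, hchainB, hchordB⟩ := exists_path_data hB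
  have h3A : 3 ≤ nA := by
    by_contra h
    interval_cases nA
    · exact hxy (hA0 ▸ hAL ▸ rfl)
    · have := hchainA 0 (by omega)
      rw [hA0, show (1 : ℕ) = 2 - 1 by rfl, hAL] at this
      exact hnadj this
  have h3B : 3 ≤ nB := by
    by_contra h
    interval_cases nB
    · exact hxy (hB0 ▸ hBL ▸ rfl)
    · have := hchainB 0 (by omega)
      rw [hB0, show (1 : ℕ) = 2 - 1 by rfl, hBL] at this
      exact hnadj this
  set n := nA + nB - 2 with hn
  have hn4 : 4 ≤ n := by omega
  have uniqAx : ∀ k, k < nA → fA k = x → k = 0 := by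
    intro k hk hkx
    exact hinjA k 0 hk (by omega) (by rw [hkx, hA0])
  have uniqAy : ∀ k, k < nA → fA k = y → k = nA - 1 := by
    intro k hk hky
    exact hinjA k (nA - 1) hk (by omega) (by rw [hky, hAL])
  have uniqBx : ∀ k, k < nB → fB k = x → k = 0 := by
    intro k hk hkx
    exact hinjB k 0 hk (by omega) (by rw [hkx, hB0])
  have uniqBy : ∀ k, k < nB → fB k = y → k = nB - 1 := by
    intro k hk hky
    exact hinjB k (nB - 1) hk (by omega) (by rw [hky, hBL])
  -- the cycle function
  set fv : ℕ → V := fun k => if k < nA then fA k else fB (nB - 2 - (k - nA)) with hfv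
  have fvA : ∀ k, k < nA → fv k = fA k := fun k hk => by simp only [hfv, if_pos hk]
  have fvB : ∀ k, nA ≤ k → fv k = fB (nB - 2 - (k - nA)) := by
    intro k hk
    have hk' : ¬ k < nA := by omega
    simp only [hfv, if_neg hk']
  -- cross adjacency analysis: q an interior position of lB
  have crossAdj : ∀ p q, p < nA → 1 ≤ q → q ≤ nB - 2 → G.Adj (fA p) (fB q) →
      (p = 0 ∧ q = 1) ∨ (p = nA - 1 ∧ q = nB - 2) := by
    intro p q hp hq1 hq2 hadj
    have hq : q < nB := by omega
    have hqx : fB q ≠ x := fun hc => by have := uniqBx q hq hc; omega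
    have hqy : fB q ≠ y := fun hc => by have := uniqBy q hq hc; omega
    rcases Classical.em (fA p = x) with hx' | hx'
    · have hp0 : p = 0 := uniqAx p hp hx'
      have : G.Adj (fB 0) (fB q) := by rw [hB0, ← hx']; exact hadj
      rcases hchordB 0 q (by omega) hq this with h | h
      · omega
      · left; exact ⟨hp0, by omega⟩
    rcases Classical.em (fA p = y) with hy' | hy'
    · have hp1 : p = nA - 1 := uniqAy p hp hy'
      have : G.Adj (fB (nB - 1)) (fB q) := by rw [hBL, ← hy']; exact hadj
      rcases hchordB (nB - 1) q (by omega) hq this with h | h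
      · right; exact ⟨hp1, by omega⟩
      · omega
    exact absurd hadj (hnon _ _ (hmemA p hp) (hmemB q hq) hx' hy' hqx hqy)
  -- disjointness of interiors
  have crossEq : ∀ p q, p < nA → 1 ≤ q → q ≤ nB - 2 → fA p ≠ fB q := by
    intro p q hp hq1 hq2 hc
    have hq : q < nB := by omega
    rcases hdisj _ (hc ▸ hmemA p hp) (hmemB q hq) with h | h
    · have := uniqBx q hq h; omega
    · have := uniqBy q hq h; omega
  -- main adjacency characterization for ordered pairs
  have main : ∀ a b, a < b → b < n →
      (G.Adj (fv a) (fv b) ↔ (a + 1 = b ∨ (a = 0 ∧ b = n - 1))) := by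
    intro a b hab hbn
    rcases Nat.lt_or_ge b nA with hbA | hbB
    · rw [fvA a (by omega), fvA b hbA]
      constructor
      · intro hadj
        rcases hchordA a b (by omega) hbA hadj with h | h <;> omega
      · intro h
        have hb : a + 1 = b := by omega
        rw [← hb]
        exact hchainA a (by omega)
    · have hqb1 : 1 ≤ nB - 2 - (b - nA) := by omega
      have hqb2 : nB - 2 - (b - nA) ≤ nB - 2 := by omega
      rw [fvB b hbB]
      rcases Nat.lt_or_ge a nA with haA | haB
      · rw [fvA a haA]
        constructor
        · intro hadj
          rcases crossAdj a _ haA hqb1 hqb2 hadj with ⟨h1, h2⟩ | ⟨h1, h2⟩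
          · right; exact ⟨h1, by omega⟩
          · left; omega
        · rintro (h | ⟨h1, h2⟩)
          · have ha' : a = nA - 1 := by omega
            have h2 : nB - 2 - (b - nA) = nB - 2 := by omega
            have hyA : fA a = y := by rw [ha', hAL]
            have := hchainB (nB - 2) (by omega)
            rw [show nB - 2 + 1 = nB - 1 by omega, hBL] at this
            rw [h2, hyA]
            exact this.symm
          · have h2' : nB - 2 - (b - nA) = 1 := by omega
            have hxA : fA a = x := by rw [h1, hA0]
            have := hchainB 0 (by omega)
            rw [hB0] at this
            rw [h2', hxA]
            exact this
      · have hqa1 : 1 ≤ nB - 2 - (a - nA) := by omega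
        have hqa2 : nB - 2 - (a - nA) ≤ nB - 2 := by omega
        rw [fvB a haB]
        constructor
        · intro hadj
          rcases hchordB _ _ (by omega) (by omega) hadj with h | h
          · left; omega
          · left; omega
        · intro h
          have hb : a + 1 = b := by omega
          have harith : nB - 2 - (b - nA) + 1 = nB - 2 - (a - nA) := by omega
          have := hchainB (nB - 2 - (b - nA)) (by omega)
          rw [harith] at this
          exact this.symm
  -- injectivity
  have hinj : ∀ a b, a < b → b < n → fv a ≠ fv b := by
    intro a b hab hbn hc
    rcases Nat.lt_or_ge b nA with hbA | hbB
    · rw [fvA a (by omega), fvA b hbA] at hc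
      have := hinjA a b (by omega) hbA hc
      omega
    · rw [fvB b hbB] at hc
      rcases Nat.lt_or_ge a nA with haA | haB
      · rw [fvA a haA] at hc
        exact crossEq a _ haA (by omega) (by omega) hc
      · rw [fvB a haB] at hc
        have := hinjB _ _ (by omega) (by omega) hc
        omega
  -- assemble the embedding
  have hemb : Nonempty (SimpleGraph.cycleGraph n ↪g G) := by
    refine ⟨⟨⟨fun i => fv i.val, ?_⟩, ?_⟩⟩
    · intro i j hij
      simp only at hij
      rcases Nat.lt_trichotomy i.val j.val with h | h | h
      · exact absurd hij (hinj _ _ h j.isLt)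
      · exact Fin.ext h
      · exact absurd hij.symm (hinj _ _ h i.isLt)
    · intro i j
      show G.Adj (fv i.val) (fv j.val) ↔ (SimpleGraph.cycleGraph n).Adj i j
      rw [cycleGraph_adj_iff (by omega)]
      rcases Nat.lt_trichotomy i.val j.val with h | h | h
      · rw [main i.val j.val h j.isLt]
        have hi := i.isLt; have hj := j.isLt
        constructor
        · rintro (h1 | ⟨h1, h2⟩) <;> omega
        · intro h1; omega
      · exact iff_of_false (by rw [show i = j from Fin.ext h]; exact G.irrefl)
          (by have hi := i.isLt; omega)
      · rw [SimpleGraph.adj_comm, main j.val i.val h i.isLt]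
        have hi := i.isLt; have hj := j.isLt
        constructor
        · rintro (h1 | ⟨h1, h2⟩) <;> omega
        · intro h1; omega
  exact (hch n hn4).false hemb.some


/-- Dirac: a chordal graph has a simplicial vertex avoiding any given clique. -/
lemma dirac_aux [Fintype V] (hch : ∀ n : ℕ, 4 ≤ n → IsEmpty (SimpleGraph.cycleGraph n ↪g G)) :
    ∀ (N : ℕ) (R X : Set V), R.ncard ≤ N → X ⊆ R → G.IsClique X → X ≠ R →
      ∃ v, v ∈ R \ X ∧ SimplicialIn G R v := by
  intro N
  induction N with
  | zero =>
      intro R X hcard hXR hXcl hXne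
      have : R = ∅ := by
        rw [← Set.ncard_eq_zero R.toFinite]; omega
      subst this
      exact absurd (Set.subset_empty_iff.1 hXR) hXne
  | succ N ih =>
      intro R X hcard hXR hXcl hXne
      by_cases hcomp : ∀ a ∈ R, ∀ b ∈ R, a ≠ b → G.Adj a b
      · obtain ⟨v, hvR, hvX⟩ := Set.exists_of_ssubset (ssubset_of_subset_of_ne hXR hXne)
        refine ⟨v, ⟨hvR, hvX⟩, ?_⟩
        intro u hu w hw huw
        exact hcomp u hu.1 w hw.1 huw
      · push_neg at hcomp
        obtain ⟨a, haR, b, hbR, hab, hnadj⟩ := hcomp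
        classical
        set Sep : Set V → Prop :=
          fun S => S ⊆ R ∧ a ∉ S ∧ b ∉ S ∧ ¬ ReachIn G (R \ S) a b with hSep
        have hsep0 : Sep (R \ {a, b}) := by
          refine ⟨Set.diff_subset, by simp, by simp, ?_⟩
          rintro ⟨haW, rtg⟩
          have hsub : R \ (R \ {a, b}) ⊆ {a, b} := by
            intro v hv
            rcases Classical.em (v ∈ ({a, b} : Set V)) with h | h
            · exact h
            · exact absurd ⟨hv.1, h⟩ hv.2
          rcases Relation.ReflTransGen.cases_head rtg with h | ⟨c, hstep, _⟩
          · exact hab h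
          · rcases hsub hstep.2.1 with h | h
            · subst h; exact G.irrefl hstep.2.2
            · simp only [Set.mem_singleton_iff] at h
              subst h; exact hnadj hstep.2.2
        have hsne : {m | ∃ S, Sep S ∧ S.ncard = m}.Nonempty :=
          ⟨_, _, hsep0, rfl⟩
        obtain ⟨S, hS, hScard⟩ := Nat.sInf_mem hsne
        have hSmin : ∀ S', Sep S' → S.ncard ≤ S'.ncard := by
          intro S' hS'
          rw [hScard]
          exact Nat.sInf_le ⟨S', hS', rfl⟩
        obtain ⟨hSR, haS, hbS, hSnreach⟩ := hS
        have haRS : a ∈ R \ S := ⟨haR, haS⟩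
        have hbRS : b ∈ R \ S := ⟨hbR, hbS⟩
        have hreach_ab : ∀ s ∈ S, ReachIn G (R \ (S \ {s})) a b := by
          intro s hs
          by_contra hcon
          have hsep' : Sep (S \ {s}) :=
            ⟨(Set.diff_subset).trans hSR, fun h => haS h.1, fun h => hbS h.1, hcon⟩
          have hlt : (S \ {s}).ncard < S.ncard :=
            Set.ncard_diff_singleton_lt_of_mem hs S.toFinite
          have := hSmin _ hsep'
          omega
        have sep_nbr : ∀ (c d : V), c ∈ R \ S → ¬ ReachIn G (R \ S) c d →
            ∀ s ∈ S, ReachIn G (R \ (S \ {s})) c d →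
            ∃ u, ReachIn G (R \ S) c u ∧ G.Adj u s := by
          intro c d hcRS hnr s hs hr
          obtain ⟨hcW, rtg⟩ := hr
          have key : ∀ e, Relation.ReflTransGen (Step G (R \ (S \ {s}))) c e →
              ReachIn G (R \ S) c e ∨ ∃ u, ReachIn G (R \ S) c u ∧ G.Adj u s := by
            intro e hrtg
            induction hrtg with
            | refl => exact Or.inl (ReachIn.refl hcRS)
            | @tail p q hrtg hstep ihh =>
                rcases ihh with hp | hgoal
                · rcases Classical.em (q = s) with rfl | hqs
                  · exact Or.inr ⟨p, hp, hstep.2.2⟩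
                  · have hqRS : q ∈ R \ S := by
                      refine ⟨hstep.2.1.1, fun hqS => hstep.2.1.2 ⟨hqS, hqs⟩⟩
                    exact Or.inl (hp.tail hqRS hstep.2.2)
                · exact Or.inr hgoal
          rcases key d rtg with h | h
          · exact absurd h hnr
          · exact h
        have hnra : ¬ ReachIn G (R \ S) a b := hSnreach
        have hnrb : ¬ ReachIn G (R \ S) b a := fun h => hSnreach h.symm
        have hnbrA : ∀ s ∈ S, ∃ u, ReachIn G (R \ S) a u ∧ G.Adj u s := by
          intro s hs
          exact sep_nbr a b haRS hnra s hs (hreach_ab s hs)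
        have hnbrB : ∀ s ∈ S, ∃ u, ReachIn G (R \ S) b u ∧ G.Adj u s := by
          intro s hs
          exact sep_nbr b a hbRS hnrb s hs (hreach_ab s hs).symm
        -- S is a clique
        have hScl : G.IsClique S := by
          intro p hp q hq hpq
          by_contra hnadjpq
          have hpR : p ∈ R := hSR hp
          have hqR : q ∈ R := hSR hq
          set A : Set V := {v | ReachIn G (R \ S) a v} with hA
          set B : Set V := {v | ReachIn G (R \ S) b v} with hB
          have hABdisj : ∀ v, v ∈ A → v ∈ B → False :=
            fun v hva hvb => hSnreach (hva.trans hvb.symm)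
          have hAsub : A ⊆ R \ S := fun v hv => hv.mem_right
          have hBsub : B ⊆ R \ S := fun v hv => hv.mem_right
          refine no_two_disjoint_paths (G := G) hch hpq hnadjpq
            (WA := A ∪ {p, q}) (WB := B ∪ {p, q}) ?_ ?_ ?_ ?_
          · intro v hv hv'
            rcases hv with hv | hv
            · rcases hv' with hv' | hv'
              · exact absurd hv' (fun h => hABdisj v hv h)
              · simpa using hv'
            · simpa using hv
          · intro u w hu hw hux huy hwx hwy
            have huA : u ∈ A := by
              rcases hu with h | h
              · exact h
              · simp only [Set.mem_insert_iff, Set.mem_singleton_iff] at h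
                rcases h with rfl | rfl
                · exact absurd rfl hux
                · exact absurd rfl huy
            have hwB : w ∈ B := by
              rcases hw with h | h
              · exact h
              · simp only [Set.mem_insert_iff, Set.mem_singleton_iff] at h
                rcases h with rfl | rfl
                · exact absurd rfl hwx
                · exact absurd rfl hwy
            intro hadj
            exact hABdisj w (huA.tail (hBsub hwB) hadj) hwB
          · -- good chain through A
            rw [← reachIn_iff_goodChain]
            obtain ⟨u, hu, huadj⟩ := hnbrA p hp
            obtain ⟨w, hw, hwadj⟩ := hnbrA q hq
            have huw : ReachIn G (R \ S) u w := hu.symm.trans hw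
            have huwA : ReachIn G A u w := hu.within_reachSet huw
            have huwWA : ReachIn G (A ∪ {p, q}) u w := huwA.mono Set.subset_union_left
            have hpW : p ∈ A ∪ {p, q} := Or.inr (by simp)
            have hqW : q ∈ A ∪ {p, q} := Or.inr (by simp)
            exact (((ReachIn.refl hpW).tail (Or.inl hu) huadj.symm).trans huwWA).tail
              hqW hwadj
          · rw [← reachIn_iff_goodChain]
            obtain ⟨u, hu, huadj⟩ := hnbrB p hp
            obtain ⟨w, hw, hwadj⟩ := hnbrB q hq
            have huw : ReachIn G (R \ S) u w := hu.symm.trans hw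
            have huwB : ReachIn G B u w := hu.within_reachSet huw
            have huwWB : ReachIn G (B ∪ {p, q}) u w := huwB.mono Set.subset_union_left
            have hpW : p ∈ B ∪ {p, q} := Or.inr (by simp)
            have hqW : q ∈ B ∪ {p, q} := Or.inr (by simp)
            exact (((ReachIn.refl hpW).tail (Or.inl hu) huadj.symm).trans huwWB).tail
              hqW hwadj
        -- from a component, get a simplicial vertex of G[R] inside it
        have key : ∀ c d, c ∈ R \ S → d ∈ R \ S → ¬ ReachIn G (R \ S) c d →
            ∃ v, ReachIn G (R \ S) c v ∧ SimplicialIn G R v := by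
          intro c d hcRS hdRS hnrcd
          set A : Set V := {v | ReachIn G (R \ S) c v} with hA
          have hAsub : A ⊆ R \ S := fun v hv => hv.mem_right
          have hsubR : A ∪ S ⊆ R := Set.union_subset (hAsub.trans Set.diff_subset) hSR
          have hdA : d ∉ A := fun h => hnrcd h
          have hdAS : d ∉ A ∪ S := by
            rintro (h | h)
            · exact hdA h
            · exact hdRS.2 h
          have hss : A ∪ S ⊂ R := ⟨hsubR, fun h => hdAS (h hdRS.1)⟩
          have hcard' : (A ∪ S).ncard ≤ N := by
            have := Set.ncard_lt_ncard hss R.toFinite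
            omega
          have hSne : S ≠ A ∪ S := by
            intro h
            have : c ∈ S := h ▸ (Or.inl (ReachIn.refl hcRS) : c ∈ A ∪ S)
            exact hcRS.2 this
          obtain ⟨v, ⟨hvAS, hvS⟩, hvsimp⟩ :=
            ih (A ∪ S) S hcard' Set.subset_union_right hScl hSne
          have hvA : v ∈ A := by
            rcases hvAS with h | h
            · exact h
            · exact absurd h hvS
          refine ⟨v, hvA, ?_⟩
          have hnbhd : nbhdIn G R v = nbhdIn G (A ∪ S) v := by
            ext u
            constructor
            · rintro ⟨huR, hadj⟩
              refine ⟨?_, hadj⟩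
              rcases Classical.em (u ∈ S) with h | h
              · exact Or.inr h
              · exact Or.inl (hvA.tail ⟨huR, h⟩ hadj.symm)
            · rintro ⟨huAS, hadj⟩
              exact ⟨hsubR huAS, hadj⟩
          unfold SimplicialIn
          rw [hnbhd]
          exact hvsimp
        obtain ⟨va, hvaA, hvasimp⟩ := key a b haRS hbRS hnra
        obtain ⟨vb, hvbB, hvbsimp⟩ := key b a hbRS haRS hnrb
        rcases Classical.em (va ∈ X) with hvaX | hvaX
        · rcases Classical.em (vb ∈ X) with hvbX | hvbX
          · exfalso
            have hne : va ≠ vb := by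
              rintro rfl
              exact hSnreach (hvaA.trans hvbB.symm)
            have hadj := hXcl hvaX hvbX hne
            exact hSnreach (hvaA.tail hvbB.mem_right hadj |>.trans hvbB.symm)
          · exact ⟨vb, ⟨hvbB.mem_right.1, hvbX⟩, hvbsimp⟩
        · exact ⟨va, ⟨hvaA.mem_right.1, hvaX⟩, hvasimp⟩

end EvapAux

/-- Suppose `G` is a connected chordal graph containing a clique `X`, and
`C` is a connected component of `G − X`. Then the evaporation time of the vertex set `C` in
`G` with exception set `X` equals the length of the evaporation sequence of the induced
subgraph `G[X ∪ C]` with exception set `X`. -/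
theorem evapTimeOf_component_eq {V : Type*} [Fintype V] (G : SimpleGraph V) (X : Set V)
    (hG : G.Connected) (hch : IsChordal G) (hX : G.IsClique X)
    (C : Set V) (hC : IsCompOf G Xᶜ C) :
    evapTimeOf G X C =
      evapTime (G.induce (X ∪ C)) (Subtype.val ⁻¹' X : Set ↥(X ∪ C)) := by
  classical
  obtain ⟨hCne, hCsub, hCconn, hCmax⟩ := hC
  set G' : SimpleGraph ↥(X ∪ C) := G.induce (X ∪ C) with hG'
  set X' : Set ↥(X ∪ C) := Subtype.val ⁻¹' X with hX'
  have hXCdisj : ∀ v ∈ C, v ∉ X := fun v hv => hCsub hv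
  -- neighbors of C stay in X ∪ C
  have hnbr : ∀ v ∈ C, ∀ u, G.Adj u v → u ∈ X ∪ C := by
    intro v hv u hadj
    by_contra hu
    have huX : u ∉ X := fun h => hu (Or.inl h)
    have huC : u ∉ C := fun h => hu (Or.inr h)
    have hDconn : (G.induce (insert u C)).Connected := by
      have hne : Nonempty ↥(insert u C) := ⟨⟨u, Set.mem_insert _ _⟩⟩
      rw [SimpleGraph.connected_iff]
      refine ⟨?_, hne⟩
      set hhom := SimpleGraph.induceHomOfLE G (Set.subset_insert u C) with hhomdef
      have hreach : ∀ w : ↥(insert u C), (G.induce (insert u C)).Reachable w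
          ⟨v, Set.mem_insert_of_mem _ hv⟩ := by
        intro w
        rcases Classical.em (w.val ∈ C) with hwC | hwC
        · have hmap := (hCconn.preconnected ⟨w.val, hwC⟩ ⟨v, hv⟩).map hhom.toHom
          have hw' : (hhom.toHom ⟨w.val, hwC⟩ : ↥(insert u C)) = w := by
            ext; simp [hhomdef]; rfl
          have hv' : (hhom.toHom ⟨v, hv⟩ : ↥(insert u C)) =
              ⟨v, Set.mem_insert_of_mem _ hv⟩ := by
            ext; simp [hhomdef]; rfl
          rw [hw', hv'] at hmap
          exact hmap
        · have hwu : w.val = u := by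
            rcases w.2 with h | h
            · exact h
            · exact absurd h hwC
          have hadj' : (G.induce (insert u C)).Adj w ⟨v, Set.mem_insert_of_mem _ hv⟩ := by
            have : G.Adj w.val v := by rw [hwu]; exact hadj
            exact this
          exact hadj'.reachable
      intro w₁ w₂
      exact (hreach w₁).trans (hreach w₂).symm
    have := hCmax (insert u C) (Set.subset_insert u C)
      (by
        intro w hw
        rcases hw with rfl | hw
        · exact huX
        · exact hCsub hw) hDconn
    exact huC (this ▸ Set.mem_insert u C)
  -- X never evaporates
  have hXsub : ∀ n, X ⊆ evapR G X n := by
    intro n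
    induction n with
    | zero => exact Set.subset_univ X
    | succ n ihn =>
        intro v hv
        exact ⟨ihn hv, fun hmem => hmem.2.1 hv⟩
  have hXsub' : ∀ n, X' ⊆ evapR G' X' n := by
    intro n
    induction n with
    | zero => exact Set.subset_univ X'
    | succ n ihn =>
        intro v hv
        exact ⟨ihn hv, fun hmem => hmem.2.1 hv⟩
  -- monotonicity
  have hmono : ∀ m n : ℕ, m ≤ n → evapR G X n ⊆ evapR G X m := by
    intro m n hmn
    induction n with
    | zero => rw [Nat.le_zero.1 hmn]
    | succ n ihn =>
        rcases Nat.lt_or_ge m (n+1) with h | h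
        · exact (Set.diff_subset).trans (ihn (by omega))
        · rw [show m = n + 1 by omega]
  have hval_inj : Function.Injective (Subtype.val : ↥(X ∪ C) → V) := Subtype.val_injective
  -- the invariant
  have hinv : ∀ n, Subtype.val '' (evapR G' X' n) = X ∪ (evapR G X n ∩ C) := by
    intro n
    induction n with
    | zero =>
        show Subtype.val '' Set.univ = X ∪ (Set.univ ∩ C)
        rw [Set.image_univ, Subtype.range_coe, Set.univ_inter]
    | succ n ihn =>
        show Subtype.val '' (evapR G' X' n \ _) = X ∪ ((evapR G X n \ _) ∩ C)
        rw [Set.image_diff hval_inj, ihn]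
        -- simpliciality correspondence
        have hsimp : ∀ (v : ↥(X ∪ C)), v.val ∈ C → v ∈ evapR G' X' n →
            (SimplicialIn G' (evapR G' X' n) v ↔ SimplicialIn G (evapR G X n) v.val) := by
          intro v hvC hvE
          have himg : Subtype.val '' (nbhdIn G' (evapR G' X' n) v) =
              nbhdIn G (evapR G X n) v.val := by
            ext u
            constructor
            · rintro ⟨u', ⟨hu'E, hu'adj⟩, rfl⟩
              have : u'.val ∈ X ∪ (evapR G X n ∩ C) := ihn ▸ ⟨u', hu'E, rfl⟩
              rcases this with h | h
              · exact ⟨hXsub n h, hu'adj⟩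
              · exact ⟨h.1, hu'adj⟩
            · rintro ⟨huE, huadj⟩
              have huXC : u ∈ X ∪ C := hnbr v.val hvC u huadj
              have : u ∈ X ∪ (evapR G X n ∩ C) := by
                rcases huXC with h | h
                · exact Or.inl h
                · exact Or.inr ⟨huE, h⟩
              rw [← ihn] at this
              obtain ⟨u', hu'E, hu'val⟩ := this
              refine ⟨u', ⟨hu'E, ?_⟩, hu'val⟩
              show G.Adj u'.val v.val
              rw [hu'val]
              exact huadj
          constructor
          · intro hs
            intro u₁ hu₁ u₂ hu₂ hne
            rw [← himg] at hu₁ hu₂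
            obtain ⟨u₁', hu₁', rfl⟩ := hu₁
            obtain ⟨u₂', hu₂', rfl⟩ := hu₂
            exact hs hu₁' hu₂' (fun h => hne (congrArg _ h))
          · intro hs
            intro u₁ hu₁ u₂ hu₂ hne
            have h1 : u₁.val ∈ nbhdIn G (evapR G X n) v.val :=
              himg ▸ Set.mem_image_of_mem _ hu₁
            have h2 : u₂.val ∈ nbhdIn G (evapR G X n) v.val :=
              himg ▸ Set.mem_image_of_mem _ hu₂
            exact hs h1 h2 (fun h => hne (hval_inj h))
        -- removal sets correspond
        have hrem : Subtype.val '' {v | v ∈ evapR G' X' n ∧ v ∉ X' ∧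
              SimplicialIn G' (evapR G' X' n) v} =
            {v | v ∈ evapR G X n ∧ v ∉ X ∧ SimplicialIn G (evapR G X n) v} ∩ C := by
          ext u
          constructor
          · rintro ⟨u', ⟨hu'E, hu'X, hu'S⟩, rfl⟩
            have : u'.val ∈ X ∪ (evapR G X n ∩ C) := ihn ▸ ⟨u', hu'E, rfl⟩
            have huC : u'.val ∈ C := by
              rcases this with h | h
              · exact absurd h hu'X
              · exact h.2
            have huE : u'.val ∈ evapR G X n := by
              rcases this with h | h
              · exact absurd h hu'X
              · exact h.1
            exact ⟨⟨huE, fun h => hu'X h, (hsimp u' huC hu'E).1 hu'S⟩, huC⟩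
          · rintro ⟨⟨huE, huX, huS⟩, huC⟩
            have huXC : u ∈ X ∪ C := Or.inr huC
            refine ⟨⟨u, huXC⟩, ⟨?_, ?_, ?_⟩, rfl⟩
            · have : u ∈ Subtype.val '' (evapR G' X' n) := by
                rw [ihn]; exact Or.inr ⟨huE, huC⟩
              obtain ⟨u', hu'E, hval⟩ := this
              have : u' = ⟨u, huXC⟩ := hval_inj (by simpa using hval)
              exact this ▸ hu'E
            · exact huX
            · refine (hsimp ⟨u, huXC⟩ huC ?_).2 huS
              have : u ∈ Subtype.val '' (evapR G' X' n) := by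
                rw [ihn]; exact Or.inr ⟨huE, huC⟩
              obtain ⟨u', hu'E, hval⟩ := this
              have : u' = ⟨u, huXC⟩ := hval_inj (by simpa using hval)
              exact this ▸ hu'E
        rw [hrem]
        ext v
        have hvXC : v ∈ X → v ∉ C := fun h hc => hXCdisj v hc h
        simp only [Set.mem_diff, Set.mem_union, Set.mem_inter_iff, Set.mem_setOf_eq]
        tauto
  -- the evaporation of G terminates
  have hterm : ∃ t, evapR G X t = X := by
    have hstep : ∀ n, evapR G X n ≠ X → (evapR G X (n+1)).ncard < (evapR G X n).ncard := by
      intro n hne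
      obtain ⟨v, hvmem, hvsimp⟩ := EvapAux.dirac_aux (G := G) hch
        ((evapR G X n).ncard) (evapR G X n) X le_rfl (hXsub n) hX (fun h => hne h.symm)
      have hss : evapR G X (n+1) ⊂ evapR G X n := by
        refine ⟨Set.diff_subset, fun hsub => ?_⟩
        have : v ∈ evapR G X (n+1) := hsub hvmem.1
        exact this.2 ⟨hvmem.1, hvmem.2, hvsimp⟩
      exact Set.ncard_lt_ncard hss (Set.toFinite _)
    have hstab : ∀ n, evapR G X n = X → evapR G X (n+1) = X := by
      intro n h
      apply Set.Subset.antisymm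
      · exact (Set.diff_subset).trans h.subset
      · exact hXsub (n+1)
    have hclaim : ∀ n, evapR G X n = X ∨ (evapR G X n).ncard + n ≤ Fintype.card V := by
      intro n
      induction n with
      | zero =>
          right
          rw [show evapR G X 0 = Set.univ from rfl, Set.ncard_univ]
          simp [Nat.card_eq_fintype_card]
      | succ n ihn =>
          rcases ihn with h | h
          · exact Or.inl (hstab n h)
          · rcases Classical.em (evapR G X n = X) with h' | h'
            · exact Or.inl (hstab n h')
            · right
              have := hstep n h'
              omega
    rcases hclaim (Fintype.card V) with h | h
    · exact ⟨_, h⟩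
    · have h0 : (evapR G X (Fintype.card V)).ncard = 0 := by omega
      have hE : evapR G X (Fintype.card V) = ∅ := by
        rw [← Set.ncard_eq_zero (Set.toFinite _)]; exact h0
      have hXe : X = ∅ := Set.subset_empty_iff.1 (hE ▸ hXsub (Fintype.card V))
      exact ⟨Fintype.card V, hE.trans hXe.symm⟩
  -- the equivalence between the two processes
  have hXval : Subtype.val '' X' = X := by
    rw [hX', Subtype.image_preimage_coe]
    exact Set.inter_eq_self_of_subset_right Set.subset_union_left
  have hiff : ∀ t, evapR G' X' t = X' ↔ evapR G X t ∩ C = ∅ := by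
    intro t
    constructor
    · intro h
      have := congrArg (Set.image Subtype.val) h
      rw [hinv t, hXval] at this
      rw [← Set.subset_empty_iff]
      intro v hv
      have : v ∈ X := this ▸ (Or.inr hv : v ∈ X ∪ (evapR G X t ∩ C))
      exact absurd this (hXCdisj v hv.2)
    · intro h
      have himg : Subtype.val '' (evapR G' X' t) = Subtype.val '' X' := by
        rw [hinv t, hXval, h, Set.union_empty]
      exact Set.image_injective.2 hval_inj himg
  set T : Set ℕ := {t | evapR G' X' t = X'} with hT
  have hTne : T.Nonempty := by
    obtain ⟨t, ht⟩ := hterm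
    refine ⟨t, (hiff t).2 ?_⟩
    rw [ht]
    exact Set.eq_empty_of_forall_notMem (fun v hv => hXCdisj v hv.2 hv.1)
  have ht'mem : evapR G' X' (sInf T) = X' := Nat.sInf_mem hTne
  set t' : ℕ := sInf T with ht'
  have hCt' : evapR G X t' ∩ C = ∅ := (hiff t').1 ht'mem
  have ht'pos : 0 < t' := by
    rcases Nat.eq_zero_or_pos t' with h | h
    · exfalso
      rw [h] at hCt'
      rw [show evapR G X 0 = Set.univ from rfl, Set.univ_inter] at hCt'
      exact hCne.ne_empty hCt'
    · exact h
  have hprev : (evapR G X (t' - 1) ∩ C).Nonempty := by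
    rw [Set.nonempty_iff_ne_empty]
    intro h
    have : t' - 1 ∈ T := (hiff (t'-1)).2 h
    have := Nat.sInf_le this
    omega
  show sSup {i | (evapLayer G X i ∩ C).Nonempty} = t'
  have hub : ∀ i ∈ {i | (evapLayer G X i ∩ C).Nonempty}, i ≤ t' := by
    intro i hi
    by_contra hgt
    push_neg at hgt
    obtain ⟨v, hvL, hvC⟩ := hi
    have hin : v ∈ evapR G X t' ∩ C := ⟨hmono t' (i-1) (by omega) hvL.1, hvC⟩
    rw [hCt'] at hin
    exact hin
  have hmem : t' ∈ {i | (evapLayer G X i ∩ C).Nonempty} := by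
    obtain ⟨v, hvE, hvC⟩ := hprev
    refine ⟨v, ⟨hvE, ?_⟩, hvC⟩
    intro hvt'
    have hin : v ∈ evapR G X t' ∩ C := ⟨hvt', hvC⟩
    rw [hCt'] at hin
    exact hin
  exact le_antisymm (csSup_le ⟨t', hmem⟩ hub) (le_csSup ⟨t', hub⟩ hmem)
end

section
/- The questioning set Q of any split graph G is either a clique or an independent set. -/
/-- A set of vertices is independent if no two of its members are adjacent. -/
def IsIndep {V : Type*} (G : SimpleGraph V) (s : Set V) : Prop :=
  s.Pairwise fun u v => ¬ G.Adj u v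

/-- `(C, I)` is a split partition of `G`: `C` and `I` are disjoint, cover all vertices,
`C` is a clique and `I` is an independent set (empty parts are allowed). -/
def IsSplitPartition {V : Type*} (G : SimpleGraph V) (C I : Set V) : Prop :=
  Disjoint C I ∧ C ∪ I = Set.univ ∧ G.IsClique C ∧ IsIndep G I

/-- A split graph: the vertex set can be partitioned into a clique and an independent set. -/
def IsSplit {V : Type*} (G : SimpleGraph V) : Prop :=
  ∃ C I : Set V, IsSplitPartition G C I

/-- The always-clique set: vertices belonging to the clique part of every split partition. -/
def alwaysClique {V : Type*} (G : SimpleGraph V) : Set V :=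
  {v | ∀ C I : Set V, IsSplitPartition G C I → v ∈ C}

/-- The always-independent set: vertices belonging to the independent part of every
split partition. -/
def alwaysIndep {V : Type*} (G : SimpleGraph V) : Set V :=
  {v | ∀ C I : Set V, IsSplitPartition G C I → v ∈ I}

/-- The questioning set: vertices placed in the clique part by some split partition and
in the independent part by some (other) split partition. -/
def questioning {V : Type*} (G : SimpleGraph V) : Set V :=
  {v | (∃ C I : Set V, IsSplitPartition G C I ∧ v ∈ C) ∧
       (∃ C I : Set V, IsSplitPartition G C I ∧ v ∈ I)}

/-- If a vertex lies in a clique and an independent set simultaneously with another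
vertex, they are equal. -/
lemma eq_of_mem_clique_indep {V : Type*} {G : SimpleGraph V} {C I : Set V}
    (hC : G.IsClique C) (hI : IsIndep G I) {a b : V} (haC : a ∈ C) (hbC : b ∈ C)
    (haI : a ∈ I) (hbI : b ∈ I) : a = b := by
  by_contra h
  exact hI haI hbI h (hC haC hbC h)

lemma mem_right_of_split {V : Type*} {G : SimpleGraph V} {C I : Set V}
    (hP : IsSplitPartition G C I) {v : V} (h : v ∉ C) : v ∈ I := by
  have hu := hP.2.1
  have hm : v ∈ C ∪ I := hu ▸ Set.mem_univ v
  exact hm.resolve_left h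

/-- Core contradiction: an edge `u v` of the questioning set, a partition placing `v`
(and `w`) in the independent part, and a partition placing `w` in the clique part,
together with a side condition, are impossible. -/
lemma key {V : Type*} {G : SimpleGraph V} {u v w : V} (huv : G.Adj u v)
    {Cv Iv Cw Iw : Set V} (hPv : IsSplitPartition G Cv Iv) (hPw : IsSplitPartition G Cw Iw)
    (hvIv : v ∈ Iv) (hwCw : w ∈ Cw) (hwu : w ≠ u) (hwv : w ≠ v) (hwIv : w ∈ Iv)
    (hside : ¬ G.Adj u w ∨ ∃ Cu Iu : Set V, IsSplitPartition G Cu Iu ∧ u ∈ Iu ∧ w ∈ Iu) :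
    False := by
  have hvCw : v ∉ Cw := fun hv =>
    hwv (eq_of_mem_clique_indep hPw.2.2.1 hPv.2.2.2 hwCw hv hwIv hvIv)
  have huCw : u ∉ Cw := by
    rcases hside with h | ⟨Cu, Iu, hPu, huIu, hwIu⟩
    · exact fun hu => h (hPw.2.2.1 hu hwCw (Ne.symm hwu))
    · exact fun hu => hwu (eq_of_mem_clique_indep hPw.2.2.1 hPu.2.2.2 hwCw hu hwIu huIu)
  exact hPw.2.2.2 (mem_right_of_split hPw huCw) (mem_right_of_split hPw hvCw) huv.ne huv

/-- Second-level contradiction lemma. -/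
lemma key2 {V : Type*} {G : SimpleGraph V} {u v w : V} (huv : G.Adj u v)
    {Cu Iu Cv Iv : Set V} (hPu : IsSplitPartition G Cu Iu) (hPv : IsSplitPartition G Cv Iv)
    (huIu : u ∈ Iu) (hvIv : v ∈ Iv) (hwQ : w ∈ questioning G)
    (hwu : w ≠ u) (hwv : w ≠ v) (hside : ¬ G.Adj u w ∨ w ∈ Iu) : False := by
  have huCv : u ∈ Cv := by
    by_contra h
    have huIv : u ∈ Iv := mem_right_of_split hPv h
    exact hPv.2.2.2 huIv hvIv huv.ne huv
  have hwIv : w ∈ Iv := by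
    apply mem_right_of_split hPv
    intro hwCv
    rcases hside with h | hwIu
    · exact h (hPv.2.2.1 huCv hwCv (Ne.symm hwu))
    · exact hwu (eq_of_mem_clique_indep hPv.2.2.1 hPu.2.2.2 hwCv huCv hwIu huIu)
  obtain ⟨⟨Cw, Iw, hPw, hwCw⟩, _⟩ := hwQ
  refine key huv hPv hPw hvIv hwCw hwu hwv hwIv ?_
  rcases hside with h | hwIu
  · exact Or.inl h
  · exact Or.inr ⟨Cu, Iu, hPu, huIu, hwIu⟩

/-- The questioning set `Q` of any split graph `G` is either a clique or
an independent set. -/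
theorem questioning_clique_or_indep {V : Type*} [Fintype V] (G : SimpleGraph V)
    (hG : IsSplit G) :
    G.IsClique (questioning G) ∨ IsIndep G (questioning G) := by
  by_contra hcon
  push_neg at hcon
  obtain ⟨hnc, hni⟩ := hcon
  rw [SimpleGraph.isClique_iff] at hnc
  unfold IsIndep at hni
  unfold Set.Pairwise at hnc hni
  push_neg at hnc hni
  obtain ⟨x, hxQ, y, hyQ, hxy, hxyn⟩ := hnc
  obtain ⟨u, huQ, v, hvQ, huvne, huv⟩ := hni
  have huv : G.Adj u v := huv
  -- partitions placing u and v in the independent part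
  obtain ⟨_, Cu, Iu, hPu, huIu⟩ := huQ
  obtain ⟨_, Cv, Iv, hPv, hvIv⟩ := hvQ
  -- case analysis on overlap of {x,y} with {u,v}
  by_cases hxu : x = u
  · -- x = u, so y ∉ {u,v} and ¬ Adj u y
    have hyu : y ≠ u := fun h => hxy (hxu.trans h.symm)
    have hyv : y ≠ v := by
      rintro rfl
      exact hxyn (hxu ▸ huv)
    subst hxu
    exact key2 huv hPu hPv huIu hvIv hyQ hyu hyv (Or.inl hxyn)
  by_cases hxv : x = v
  · -- x = v : swap roles of u and v
    have hyv : y ≠ v := fun h => hxy (hxv.trans h.symm)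
    subst hxv
    have hyu : y ≠ u := by
      rintro rfl
      exact hxyn huv.symm
    exact key2 huv.symm hPv hPu hvIv huIu hyQ hyv hyu (Or.inl hxyn)
  by_cases hyu : y = u
  · subst hyu
    exact key2 huv hPu hPv huIu hvIv hxQ (fun h => hxy h)
      hxv (Or.inl (fun h => hxyn h.symm))
  by_cases hyv : y = v
  · subst hyv
    exact key2 huv.symm hPv hPu hvIv huIu hxQ (fun h => hxy h)
      hxu (Or.inl (fun h => hxyn h.symm))
  -- x, y both outside {u, v}
  by_cases hxIu : x ∈ Iu
  · exact key2 huv hPu hPv huIu hvIv hxQ hxu hxv (Or.inr hxIu)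
  · have hxCu : x ∈ Cu := by
      by_contra h
      exact hxIu (mem_right_of_split hPu h)
    have hyIu : y ∈ Iu := by
      apply mem_right_of_split hPu
      intro hyCu
      exact hxyn (hPu.2.2.1 hxCu hyCu hxy)
    exact key2 huv hPu hPv huIu hvIv hyQ hyu hyv (Or.inr hyIu)
end

section
/- Let G be a split graph with always-clique set C, always-independent set I, and questioning set Q. If Q is a clique, then every vertex in C has a neighbor in I. If Q is an independent set, then every vertex in I has a non-neighbor in C. -/
/-- In a split graph `G` with always-clique set `C`, always-independent
set `I`, and questioning set `Q`: if `Q` is a clique, every vertex of `C` has a neighbor in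
`I`; if `Q` is an independent set, every vertex of `I` has a non-neighbor in `C`. -/
theorem neighbor_exists {V : Type*} [Fintype V] (G : SimpleGraph V) (hG : IsSplit G) :
    (G.IsClique (questioning G) →
      ∀ v ∈ alwaysClique G, ∃ u ∈ alwaysIndep G, G.Adj v u) ∧
    (IsIndep G (questioning G) →
      ∀ v ∈ alwaysIndep G, ∃ u ∈ alwaysClique G, ¬ G.Adj v u) := by
  obtain ⟨C₀, I₀, hP₀⟩ := hG
  have cover : ∀ v : V, v ∈ alwaysClique G ∨ v ∈ alwaysIndep G ∨ v ∈ questioning G := by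
    intro v
    by_cases hc : ∃ C I : Set V, IsSplitPartition G C I ∧ v ∈ C
    · by_cases hi : ∃ C I : Set V, IsSplitPartition G C I ∧ v ∈ I
      · exact Or.inr (Or.inr ⟨hc, hi⟩)
      · push_neg at hi
        left
        intro C I hP
        have hv : v ∈ C ∪ I := hP.2.1 ▸ Set.mem_univ v
        rcases hv with h | h
        · exact h
        · exact absurd h (hi C I hP)
    · push_neg at hc
      right; left
      intro C I hP
      have hv : v ∈ C ∪ I := hP.2.1 ▸ Set.mem_univ v
      rcases hv with h | h
      · exact absurd h (hc C I hP)
      · exact h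
  have hKA : ∀ v, v ∈ alwaysClique G → v ∉ alwaysIndep G := by
    intro v hK hA
    exact Set.disjoint_left.mp hP₀.1 (hK C₀ I₀ hP₀) (hA C₀ I₀ hP₀)
  have hKQ : ∀ v, v ∈ alwaysClique G → v ∉ questioning G := by
    rintro v hK ⟨-, C, I, hP, hvI⟩
    exact Set.disjoint_left.mp hP.1 (hK C I hP) hvI
  have hAQ : ∀ v, v ∈ alwaysIndep G → v ∉ questioning G := by
    rintro v hA ⟨⟨C, I, hP, hvC⟩, -⟩
    exact Set.disjoint_left.mp hP.1 hvC (hA C I hP)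
  constructor
  · intro hQ v hv
    by_contra hcon
    push_neg at hcon
    have hClique : G.IsClique (alwaysClique G ∪ questioning G) := by
      intro a ha b hb hne
      rcases ha with ha | ha
      · rcases hb with hb | hb
        · exact hP₀.2.2.1 (ha C₀ I₀ hP₀) (hb C₀ I₀ hP₀) hne
        · obtain ⟨⟨C, I, hP, hbC⟩, -⟩ := hb
          exact hP.2.2.1 (ha C I hP) hbC hne
      · rcases hb with hb | hb
        · obtain ⟨⟨C, I, hP, haC⟩, -⟩ := ha
          exact hP.2.2.1 haC (hb C I hP) hne
        · exact hQ ha hb hne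
    have hIndep : IsIndep G (insert v (alwaysIndep G)) := by
      intro a ha b hb hne
      rcases ha with rfl | ha
      · rcases hb with rfl | hb
        · exact absurd rfl hne
        · exact hcon b hb
      · rcases hb with rfl | hb
        · exact fun hadj => hcon a ha hadj.symm
        · exact hP₀.2.2.2 (ha C₀ I₀ hP₀) (hb C₀ I₀ hP₀) hne
    have hP' : IsSplitPartition G ((alwaysClique G ∪ questioning G) \ {v})
        (insert v (alwaysIndep G)) := by
      refine ⟨?_, ?_, hClique.subset Set.diff_subset, hIndep⟩
      · rw [Set.disjoint_left]
        rintro x ⟨hx, hxv⟩ hx'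
        rcases hx' with rfl | hx'
        · exact hxv rfl
        · rcases hx with hx | hx
          · exact hKA x hx hx'
          · exact hAQ x hx' hx
      · ext x
        simp only [Set.mem_union, Set.mem_diff, Set.mem_singleton_iff, Set.mem_insert_iff,
          Set.mem_univ, iff_true]
        by_cases hxv : x = v
        · exact Or.inr (Or.inl hxv)
        · rcases cover x with h1 | h1 | h1
          · exact Or.inl ⟨Or.inl h1, hxv⟩
          · exact Or.inr (Or.inr h1)
          · exact Or.inl ⟨Or.inr h1, hxv⟩
    exact (hv _ _ hP').2 rfl
  · intro hQ v hv
    by_contra hcon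
    push_neg at hcon
    have hIndep : IsIndep G (alwaysIndep G ∪ questioning G) := by
      intro a ha b hb hne
      rcases ha with ha | ha
      · rcases hb with hb | hb
        · exact hP₀.2.2.2 (ha C₀ I₀ hP₀) (hb C₀ I₀ hP₀) hne
        · obtain ⟨-, C, I, hP, hbI⟩ := hb
          exact hP.2.2.2 (ha C I hP) hbI hne
      · rcases hb with hb | hb
        · obtain ⟨-, C, I, hP, haI⟩ := ha
          exact hP.2.2.2 haI (hb C I hP) hne
        · exact hQ ha hb hne
    have hClique : G.IsClique (insert v (alwaysClique G)) := by
      intro a ha b hb hne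
      rcases ha with rfl | ha
      · rcases hb with rfl | hb
        · exact absurd rfl hne
        · exact hcon b hb
      · rcases hb with rfl | hb
        · exact (hcon a ha).symm
        · exact hP₀.2.2.1 (ha C₀ I₀ hP₀) (hb C₀ I₀ hP₀) hne
    have hP' : IsSplitPartition G (insert v (alwaysClique G))
        ((alwaysIndep G ∪ questioning G) \ {v}) := by
      refine ⟨?_, ?_, hClique, fun a ha b hb hne => hIndep ha.1 hb.1 hne⟩
      · rw [Set.disjoint_left]
        rintro x hx ⟨hx', hxv⟩
        rcases hx with rfl | hx
        · exact hxv rfl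
        · rcases hx' with h1 | h1
          · exact hKA x hx h1
          · exact hKQ x hx h1
      · ext x
        simp only [Set.mem_union, Set.mem_diff, Set.mem_singleton_iff, Set.mem_insert_iff,
          Set.mem_univ, iff_true]
        by_cases hxv : x = v
        · exact Or.inl (Or.inl hxv)
        · rcases cover x with h1 | h1 | h1
          · exact Or.inl (Or.inr h1)
          · exact Or.inr ⟨Or.inl h1, hxv⟩
          · exact Or.inr ⟨Or.inr h1, hxv⟩
    exact (hv _ _ hP').2 rfl
end

section
/- Suppose G is a graph and {Ĉ, Î, Q̂} is a partition of V(G) (parts may be empty) with the following properties: (1) Ĉ is a clique and Î is an independent set; (2) Q̂ is a clique or an independent set, and |Q̂| ≥ 2; (3) every vertex in Q̂ is adjacent to every vertex in Ĉ and is non-adjacent to every vertex in Î; (4) if Q̂ is a clique, then every vertex in Ĉ has a neighbor in Î; (5) if Q̂ is an independent set, then every vertex in Î has a non-neighbor in Ĉ. Then G is a split graph, and moreover Ĉ is the always-clique set of G, Î is the always-independent set of G, and Q̂ is the questioning set of G. -/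
/-- Auxiliary: once we have the forward inclusions, the equalities follow. -/
lemma split_finish {V : Type*} (G : SimpleGraph V) (Chat Ihat Qhat : Set V)
    (hcover : Chat ∪ Ihat ∪ Qhat = Set.univ)
    (C0 I0 : Set V) (hP : IsSplitPartition G C0 I0)
    (hC : Chat ⊆ alwaysClique G) (hI : Ihat ⊆ alwaysIndep G)
    (hQ : Qhat ⊆ questioning G) :
    IsSplit G ∧ alwaysClique G = Chat ∧ alwaysIndep G = Ihat ∧ questioning G = Qhat := by
  have hmem : ∀ v : V, v ∈ Chat ∨ v ∈ Ihat ∨ v ∈ Qhat := by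
    intro v
    have : v ∈ Chat ∪ Ihat ∪ Qhat := hcover ▸ Set.mem_univ v
    rcases this with (h | h) | h
    · exact Or.inl h
    · exact Or.inr (Or.inl h)
    · exact Or.inr (Or.inr h)
  have dCI : ∀ v, v ∈ alwaysClique G → v ∈ alwaysIndep G → False := fun v h1 h2 =>
    hP.1.ne_of_mem (h1 _ _ hP) (h2 _ _ hP) rfl
  have dCQ : ∀ v, v ∈ alwaysClique G → v ∈ questioning G → False := by
    rintro v h1 ⟨_, C, I, hPI, hvI⟩
    exact hPI.1.ne_of_mem (h1 _ _ hPI) hvI rfl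
  have dIQ : ∀ v, v ∈ alwaysIndep G → v ∈ questioning G → False := by
    rintro v h1 ⟨⟨C, I, hPI, hvC⟩, _⟩
    exact hPI.1.ne_of_mem hvC (h1 _ _ hPI) rfl
  refine ⟨⟨C0, I0, hP⟩, ?_, ?_, ?_⟩
  · refine Set.Subset.antisymm ?_ hC
    intro v hv
    rcases hmem v with h | h | h
    · exact h
    · exact absurd (hI h) (fun h2 => dCI v hv h2)
    · exact absurd (hQ h) (fun h2 => dCQ v hv h2)
  · refine Set.Subset.antisymm ?_ hI
    intro v hv
    rcases hmem v with h | h | h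
    · exact absurd (hC h) (fun h2 => dCI v h2 hv)
    · exact h
    · exact absurd (hQ h) (fun h2 => dIQ v hv h2)
  · refine Set.Subset.antisymm ?_ hQ
    intro v hv
    rcases hmem v with h | h | h
    · exact absurd (hC h) (fun h2 => dCQ v h2 hv)
    · exact absurd (hI h) (fun h2 => dIQ v h2 hv)
    · exact h

/-- Suppose `{Ĉ, Î, Q̂}` is a partition of `V(G)` (parts may be empty)
such that: (1) `Ĉ` is a clique and `Î` is an independent set; (2) `Q̂` is a clique or an
independent set and `|Q̂| ≥ 2`; (3) every vertex of `Q̂` is adjacent to every vertex of `Ĉ`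
and non-adjacent to every vertex of `Î`; (4) if `Q̂` is a clique then every vertex of `Ĉ`
has a neighbor in `Î`; (5) if `Q̂` is an independent set then every vertex of `Î` has a
non-neighbor in `Ĉ`. Then `G` is a split graph with always-clique set `Ĉ`,
always-independent set `Î`, and questioning set `Q̂`. -/
theorem split_partition_characterization {V : Type*} [Fintype V] (G : SimpleGraph V)
    (Chat Ihat Qhat : Set V)
    (hdisjCI : Disjoint Chat Ihat) (hdisjCQ : Disjoint Chat Qhat)
    (hdisjIQ : Disjoint Ihat Qhat) (hcover : Chat ∪ Ihat ∪ Qhat = Set.univ)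
    (h1C : G.IsClique Chat) (h1I : IsIndep G Ihat)
    (h2 : G.IsClique Qhat ∨ IsIndep G Qhat) (h2' : 2 ≤ Qhat.ncard)
    (h3 : ∀ v ∈ Qhat, (∀ u ∈ Chat, G.Adj v u) ∧ (∀ u ∈ Ihat, ¬ G.Adj v u))
    (h4 : G.IsClique Qhat → ∀ v ∈ Chat, ∃ u ∈ Ihat, G.Adj v u)
    (h5 : IsIndep G Qhat → ∀ v ∈ Ihat, ∃ u ∈ Chat, ¬ G.Adj v u) :
    IsSplit G ∧ alwaysClique G = Chat ∧ alwaysIndep G = Ihat ∧ questioning G = Qhat := by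
  classical
  obtain ⟨q1, q2, hq1, hq2, hq12⟩ : ∃ a b, a ∈ Qhat ∧ b ∈ Qhat ∧ a ≠ b :=
    (Set.one_lt_ncard_iff (Set.toFinite Qhat)).mp (by omega)
  rcases h2 with hQ | hQ
  · -- Q̂ is a clique
    have hCQclique : G.IsClique (Chat ∪ Qhat) := by
      rintro a (ha | ha) b (hb | hb) hab
      · exact h1C ha hb hab
      · exact ((h3 b hb).1 a ha).symm
      · exact (h3 a ha).1 b hb
      · exact hQ ha hb hab
    have hP0 : IsSplitPartition G (Chat ∪ Qhat) Ihat := by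
      refine ⟨Set.disjoint_union_left.mpr ⟨hdisjCI, hdisjIQ.symm⟩, ?_, hCQclique, h1I⟩
      rw [← hcover]; ext v; simp; tauto
    have hPq : ∀ q ∈ Qhat, IsSplitPartition G ((Chat ∪ Qhat) \ {q}) (Ihat ∪ {q}) := by
      intro q hq
      refine ⟨?_, ?_, hCQclique.subset Set.diff_subset, ?_⟩
      · rw [Set.disjoint_left]
        rintro x ⟨hx1, hx2⟩ (hx3 | hx3)
        · rcases hx1 with h | h
          · exact hdisjCI.ne_of_mem h hx3 rfl
          · exact hdisjIQ.ne_of_mem hx3 h rfl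
        · exact hx2 hx3
      · apply Set.eq_univ_of_univ_subset
        rw [← hcover]
        intro v hv
        by_cases hvq : v = q
        · exact Or.inr (Or.inr (hvq ▸ rfl))
        · rcases hv with (h | h) | h
          · exact Or.inl ⟨Or.inl h, hvq⟩
          · exact Or.inr (Or.inl h)
          · exact Or.inl ⟨Or.inr h, hvq⟩
      · rintro a (ha | ha) b (hb | hb) hab
        · exact h1I ha hb hab
        · exact fun hadj => (h3 q hq).2 a ha ((Set.mem_singleton_iff.mp hb ▸ hadj).symm)
        · exact fun hadj => (h3 q hq).2 b hb (Set.mem_singleton_iff.mp ha ▸ hadj)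
        · exact absurd (Set.mem_singleton_iff.mp ha ▸ Set.mem_singleton_iff.mp hb ▸ rfl) hab
    have hC : Chat ⊆ alwaysClique G := by
      intro c hc C I hCI
      by_contra hcC
      have hcI : c ∈ I := by
        have hmc : c ∈ C ∪ I := by rw [hCI.2.1]; trivial
        simp only [Set.mem_union] at hmc
        tauto
      have hqC : ∀ q ∈ Qhat, q ∈ C := by
        intro q hq
        by_contra hqC
        have hqI : q ∈ I := by
          have hmq : q ∈ C ∪ I := by rw [hCI.2.1]; trivial
          simp only [Set.mem_union] at hmq
          tauto
        exact hCI.2.2.2 hqI hcI (hdisjCQ.ne_of_mem hc hq).symm ((h3 q hq).1 c hc)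
      obtain ⟨u, hu, hcu⟩ := h4 hQ c hc
      have huC : u ∈ C := by
        by_contra huC
        have huI : u ∈ I := by
          have hmu : u ∈ C ∪ I := by rw [hCI.2.1]; trivial
          simp only [Set.mem_union] at hmu
          tauto
        exact hCI.2.2.2 hcI huI hcu.ne hcu
      exact (h3 q1 hq1).2 u hu
        ((hCI.2.2.1 (hqC q1 hq1) huC (hdisjIQ.ne_of_mem hu hq1).symm))
    have hI : Ihat ⊆ alwaysIndep G := by
      intro i hi C I hCI
      by_contra hiI
      have hiC : i ∈ C := by
        have hmi : i ∈ C ∪ I := by rw [hCI.2.1]; trivial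
        simp only [Set.mem_union] at hmi
        tauto
      have : q1 ∈ C ∨ q2 ∈ C := by
        by_contra hcon
        push_neg at hcon
        have h1 : q1 ∈ I := by
          have hmq1 : q1 ∈ C ∪ I := by rw [hCI.2.1]; trivial
          simp only [Set.mem_union] at hmq1
          tauto
        have h2 : q2 ∈ I := by
          have hmq2 : q2 ∈ C ∪ I := by rw [hCI.2.1]; trivial
          simp only [Set.mem_union] at hmq2
          tauto
        exact hCI.2.2.2 h1 h2 hq12 (hQ hq1 hq2 hq12)
      rcases this with hqC | hqC
      · exact (h3 q1 hq1).2 i hi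
          ((hCI.2.2.1 hqC hiC (hdisjIQ.ne_of_mem hi hq1).symm))
      · exact (h3 q2 hq2).2 i hi
          ((hCI.2.2.1 hqC hiC (hdisjIQ.ne_of_mem hi hq2).symm))
    have hQ' : Qhat ⊆ questioning G := by
      intro q hq
      exact ⟨⟨_, _, hP0, Or.inr hq⟩, ⟨_, _, hPq q hq, Or.inr rfl⟩⟩
    exact split_finish G Chat Ihat Qhat hcover _ _ hP0 hC hI hQ'
  · -- Q̂ is independent
    have hIQindep : IsIndep G (Ihat ∪ Qhat) := by
      rintro a (ha | ha) b (hb | hb) hab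
      · exact h1I ha hb hab
      · exact fun hadj => (h3 b hb).2 a ha hadj.symm
      · exact (h3 a ha).2 b hb
      · exact hQ ha hb hab
    have hP0 : IsSplitPartition G Chat (Ihat ∪ Qhat) := by
      refine ⟨Set.disjoint_union_right.mpr ⟨hdisjCI, hdisjCQ⟩, ?_, h1C, hIQindep⟩
      rw [← hcover]; ext v; simp; tauto
    have hPq : ∀ q ∈ Qhat, IsSplitPartition G (Chat ∪ {q}) ((Ihat ∪ Qhat) \ {q}) := by
      intro q hq
      refine ⟨?_, ?_, ?_, hIQindep.mono Set.diff_subset⟩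
      · rw [Set.disjoint_left]
        rintro x (hx | hx) ⟨hx1, hx2⟩
        · rcases hx1 with h | h
          · exact hdisjCI.ne_of_mem hx h rfl
          · exact hdisjCQ.ne_of_mem hx h rfl
        · exact hx2 hx
      · apply Set.eq_univ_of_univ_subset
        rw [← hcover]
        intro v hv
        by_cases hvq : v = q
        · exact Or.inl (Or.inr (hvq ▸ rfl))
        · rcases hv with (h | h) | h
          · exact Or.inl (Or.inl h)
          · exact Or.inr ⟨Or.inl h, hvq⟩
          · exact Or.inr ⟨Or.inr h, hvq⟩
      · rintro a (ha | ha) b (hb | hb) hab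
        · exact h1C ha hb hab
        · exact (Set.mem_singleton_iff.mp hb ▸ ((h3 q hq).1 a ha).symm)
        · exact (Set.mem_singleton_iff.mp ha ▸ (h3 q hq).1 b hb)
        · exact absurd (Set.mem_singleton_iff.mp ha ▸ Set.mem_singleton_iff.mp hb ▸ rfl) hab
    have hC : Chat ⊆ alwaysClique G := by
      intro c hc C I hCI
      by_contra hcC
      have hcI : c ∈ I := by
        have hmc : c ∈ C ∪ I := by rw [hCI.2.1]; trivial
        simp only [Set.mem_union] at hmc
        tauto
      have : q1 ∈ I ∨ q2 ∈ I := by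
        by_contra hcon
        push_neg at hcon
        have h1 : q1 ∈ C := by
          have hmq1 : q1 ∈ C ∪ I := by rw [hCI.2.1]; trivial
          simp only [Set.mem_union] at hmq1
          tauto
        have h2 : q2 ∈ C := by
          have hmq2 : q2 ∈ C ∪ I := by rw [hCI.2.1]; trivial
          simp only [Set.mem_union] at hmq2
          tauto
        exact hQ hq1 hq2 hq12 (hCI.2.2.1 h1 h2 hq12)
      rcases this with hqI | hqI
      · exact hCI.2.2.2 hqI hcI (hdisjCQ.ne_of_mem hc hq1).symm ((h3 q1 hq1).1 c hc)
      · exact hCI.2.2.2 hqI hcI (hdisjCQ.ne_of_mem hc hq2).symm ((h3 q2 hq2).1 c hc)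
    have hI : Ihat ⊆ alwaysIndep G := by
      intro i hi C I hCI
      by_contra hiI
      have hiC : i ∈ C := by
        have hmi : i ∈ C ∪ I := by rw [hCI.2.1]; trivial
        simp only [Set.mem_union] at hmi
        tauto
      obtain ⟨c, hc, hic⟩ := h5 hQ i hi
      have hcI : c ∈ I := by
        by_contra hcC
        have hcC' : c ∈ C := by
          have hmc : c ∈ C ∪ I := by rw [hCI.2.1]; trivial
          simp only [Set.mem_union] at hmc
          tauto
        exact hic (hCI.2.2.1 hiC hcC' (hdisjCI.ne_of_mem hc hi).symm)
      have : q1 ∈ I ∨ q2 ∈ I := by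
        by_contra hcon
        push_neg at hcon
        have h1 : q1 ∈ C := by
          have hmq1 : q1 ∈ C ∪ I := by rw [hCI.2.1]; trivial
          simp only [Set.mem_union] at hmq1
          tauto
        have h2 : q2 ∈ C := by
          have hmq2 : q2 ∈ C ∪ I := by rw [hCI.2.1]; trivial
          simp only [Set.mem_union] at hmq2
          tauto
        exact hQ hq1 hq2 hq12 (hCI.2.2.1 h1 h2 hq12)
      rcases this with hqI | hqI
      · exact hCI.2.2.2 hqI hcI (hdisjCQ.ne_of_mem hc hq1).symm ((h3 q1 hq1).1 c hc)
      · exact hCI.2.2.2 hqI hcI (hdisjCQ.ne_of_mem hc hq2).symm ((h3 q2 hq2).1 c hc)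
    have hQ' : Qhat ⊆ questioning G := by
      intro q hq
      exact ⟨⟨_, _, hPq q hq, Or.inr rfl⟩, ⟨_, _, hP0, Or.inr hq⟩⟩
    exact split_finish G Chat Ihat Qhat hcover _ _ hP0 hC hI hQ'
end

section
/- Let n be a positive integer. The number of split graphs with vertex set {1,…,n} whose questioning set Q has size at least 2 is equal to 2 · ∑_{q=2}^{n} ∑_{c=0}^{n−q} C(n,q) · C(n−q,c) · (2^{n−c−q} − 1)^c, where C(·,·) denotes the binomial coefficient and the convention 0^0 = 1 is used (so the term with q = n and c = 0 equals 1). -/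
namespace CountSplit

variable {V : Type*} {G : SimpleGraph V}

lemma mem_C_or_I {C I : Set V} (h : IsSplitPartition G C I) (v : V) : v ∈ C ∨ v ∈ I := by
  have hv : v ∈ C ∪ I := h.2.1 ▸ Set.mem_univ v
  exact hv

lemma not_both {C I : Set V} (h : IsSplitPartition G C I) {v : V}
    (hC : v ∈ C) (hI : v ∈ I) : False :=
  Set.disjoint_left.1 h.1 hC hI

lemma diff_subsingleton {C1 I1 C2 I2 : Set V}
    (h1 : IsSplitPartition G C1 I1) (h2 : IsSplitPartition G C2 I2) :
    (C1 \ C2).Subsingleton := by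
  intro a ha b hb
  by_contra hne
  have hadj : G.Adj a b := h1.2.2.1 ha.1 hb.1 hne
  have haI : a ∈ I2 := (mem_C_or_I h2 a).resolve_left ha.2
  have hbI : b ∈ I2 := (mem_C_or_I h2 b).resolve_left hb.2
  exact h2.2.2.2 haI hbI hne hadj

lemma exists_both_indep {x y : V}
    (hx : x ∈ questioning G) (hy : y ∈ questioning G) (hxy : x ≠ y)
    (hnadj : ¬ G.Adj x y) :
    ∃ C I : Set V, IsSplitPartition G C I ∧ x ∈ I ∧ y ∈ I := by
  by_contra hcon
  push_neg at hcon
  obtain ⟨Ca, Ia, hPa, hxIa⟩ := hx.2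
  obtain ⟨Cb, Ib, hPb, hyIb⟩ := hy.2
  have hyCa : y ∈ Ca := by
    rcases mem_C_or_I hPa y with h | h
    · exact h
    · exact absurd h (hcon Ca Ia hPa hxIa)
  have hxCb : x ∈ Cb := by
    rcases mem_C_or_I hPb x with h | h
    · exact h
    · exact absurd hyIb (hcon Cb Ib hPb h)
  have key : ∀ w ∈ Ia, ¬ G.Adj y w := by
    intro w hw
    by_cases hwx : w = x
    · subst hwx; exact fun h => hnadj h.symm
    · have hwIb : w ∈ Ib := by
        rcases mem_C_or_I hPb w with h | h
        · have : w = x := diff_subsingleton hPb hPa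
            ⟨h, fun hc => not_both hPa hc hw⟩ ⟨hxCb, fun hc => not_both hPa hc hxIa⟩
          exact absurd this hwx
        · exact h
      have hyw : y ≠ w := fun h => not_both hPa hyCa (h ▸ hw)
      exact hPb.2.2.2 hyIb hwIb hyw
  have hP' : IsSplitPartition G (Ca \ {y}) (Ia ∪ {y}) := by
    refine ⟨?_, ?_, hPa.2.2.1.subset Set.diff_subset, ?_⟩
    · rw [Set.disjoint_left]
      rintro v ⟨hvC, hvy⟩ (hvI | hvy')
      · exact not_both hPa hvC hvI
      · exact hvy hvy'
    · apply Set.eq_univ_of_forall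
      intro v
      rcases mem_C_or_I hPa v with h | h
      · by_cases hvy : v = y
        · exact Or.inr (Or.inr hvy)
        · exact Or.inl ⟨h, hvy⟩
      · exact Or.inr (Or.inl h)
    · rintro u (hu | hu) v (hv | hv) huv
      · exact hPa.2.2.2 hu hv huv
      · rw [Set.mem_singleton_iff] at hv; subst hv
        exact fun h => key u hu h.symm
      · rw [Set.mem_singleton_iff] at hu; subst hu
        exact key v hv
      · rw [Set.mem_singleton_iff] at hu hv; exact absurd (hu.trans hv.symm) huv
  exact hcon _ _ hP' (Or.inl hxIa) (Or.inr rfl)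

lemma key_lemma {x y z : V}
    (hx : x ∈ questioning G) (hy : y ∈ questioning G) (hz : z ∈ questioning G)
    (hxy : x ≠ y) (hxz : x ≠ z) (hyz : y ≠ z)
    (hadj : G.Adj x y) (hnadj : ¬ G.Adj x z) : False := by
  obtain ⟨C1, I1, hP1, hxI1, hzI1⟩ := exists_both_indep hx hz hxz hnadj
  have hyC1 : y ∈ C1 := (mem_C_or_I hP1 y).resolve_right fun h =>
    hP1.2.2.2 hxI1 h hxy hadj
  obtain ⟨C2, I2, hP2, hyI2⟩ := hy.2
  have hxC2 : x ∈ C2 := (mem_C_or_I hP2 x).resolve_right fun h =>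
    hP2.2.2.2 h hyI2 hxy hadj
  have hzI2 : z ∈ I2 := by
    rcases mem_C_or_I hP2 z with h | h
    · have : z = x := diff_subsingleton hP2 hP1
        ⟨h, fun hc => not_both hP1 hc hzI1⟩ ⟨hxC2, fun hc => not_both hP1 hc hxI1⟩
      exact absurd this.symm hxz
    · exact h
  have hnyz : ¬ G.Adj y z := hP2.2.2.2 hyI2 hzI2 hyz
  have hC3 : G.IsClique (insert x C1) := by
    refine hP1.2.2.1.insert fun b hb hbx => ?_
    by_cases hby : b = y
    · subst hby; exact hadj
    · have hbC2 : b ∈ C2 := by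
        rcases mem_C_or_I hP2 b with h | h
        · exact h
        · exact absurd (diff_subsingleton hP1 hP2 ⟨hb, fun hc => not_both hP2 hc h⟩
            ⟨hyC1, fun hc => not_both hP2 hc hyI2⟩) hby
      exact hP2.2.2.1 hxC2 hbC2 hbx
  have hP3 : IsSplitPartition G (insert x C1) (I1 \ {x}) := by
    refine ⟨?_, ?_, hC3, hP1.2.2.2.mono Set.diff_subset⟩
    · rw [Set.disjoint_left]
      rintro v (rfl | hv) ⟨hvI, hvx⟩
      · exact hvx rfl
      · exact not_both hP1 hv hvI
    · apply Set.eq_univ_of_forall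
      intro v
      rcases mem_C_or_I hP1 v with h | h
      · exact Or.inl (Or.inr h)
      · by_cases hvx : v = x
        · exact Or.inl (Or.inl hvx)
        · exact Or.inr ⟨h, hvx⟩
  obtain ⟨Cz, Iz, hPz, hzCz⟩ := hz.1
  have hxCz : x ∉ Cz := fun h => hnadj (hPz.2.2.1 h hzCz hxz)
  have hyCz : y ∉ Cz := fun h => hnyz (hPz.2.2.1 h hzCz hyz)
  exact hxy (diff_subsingleton hP3 hPz ⟨Or.inl rfl, hxCz⟩ ⟨Or.inr hyC1, hyCz⟩)

lemma clique_or_indep (G : SimpleGraph V) :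
    (questioning G).Pairwise G.Adj ∨
      (questioning G).Pairwise fun u v => ¬ G.Adj u v := by
  by_cases h : (questioning G).Pairwise fun u v => ¬ G.Adj u v
  · exact Or.inr h
  · left
    rw [Set.Pairwise] at h
    push_neg at h
    obtain ⟨x, hx, y, hy, hxy, hadj⟩ := h
    have helper : ∀ u v w : V, u ∈ questioning G → v ∈ questioning G → w ∈ questioning G →
        u ≠ v → u ≠ w → v ≠ w → G.Adj u v → G.Adj u w := by
      intro u v w hu hv hw huv huw hvw hadjuv
      by_contra hn
      exact key_lemma hu hv hw huv huw hvw hadjuv hn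
    have hQx : ∀ w ∈ questioning G, w ≠ x → G.Adj x w := by
      intro w hw hwx
      by_cases hwy : w = y
      · subst hwy; exact hadj
      · exact helper x y w hx hy hw hxy (Ne.symm hwx) (Ne.symm hwy) hadj
    intro z hz w hw hzw
    rcases eq_or_ne z x with rfl | hzx
    · exact hQx w hw (Ne.symm hzw)
    · rcases eq_or_ne w x with rfl | hwx
      · exact (hQx z hz hzx).symm
      · exact helper z x w hz hx hw hzx hzw (Ne.symm hwx) (hQx z hz hzx).symm

lemma mem_three (hs : IsSplit G) (v : V) :
    v ∈ questioning G ∨ v ∈ alwaysClique G ∨ v ∈ alwaysIndep G := by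
  by_cases h1 : ∀ C I : Set V, IsSplitPartition G C I → v ∈ C
  · exact Or.inr (Or.inl h1)
  by_cases h2 : ∀ C I : Set V, IsSplitPartition G C I → v ∈ I
  · exact Or.inr (Or.inr h2)
  push_neg at h1 h2
  obtain ⟨C1, I1, hP1, hv1⟩ := h1
  obtain ⟨C2, I2, hP2, hv2⟩ := h2
  exact Or.inl ⟨⟨C2, I2, hP2, (mem_C_or_I hP2 v).resolve_right hv2⟩,
    ⟨C1, I1, hP1, (mem_C_or_I hP1 v).resolve_left hv1⟩⟩

lemma q_not_A {v : V} (hv : v ∈ questioning G) : v ∉ alwaysClique G := by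
  obtain ⟨C, I, hP, hvI⟩ := hv.2
  exact fun h => not_both hP (h C I hP) hvI

lemma q_not_B {v : V} (hv : v ∈ questioning G) : v ∉ alwaysIndep G := by
  obtain ⟨C, I, hP, hvC⟩ := hv.1
  exact fun h => not_both hP hvC (h C I hP)

lemma A_not_B (hs : IsSplit G) {v : V} (hv : v ∈ alwaysClique G) : v ∉ alwaysIndep G := by
  obtain ⟨C, I, hP⟩ := hs
  exact fun h => not_both hP (hv C I hP) (h C I hP)

lemma q_adj_A {x a : V} (hx : x ∈ questioning G) (ha : a ∈ alwaysClique G) : G.Adj x a := by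
  obtain ⟨C, I, hP, hxC⟩ := hx.1
  have hxa : x ≠ a := fun h => q_not_A hx (h ▸ ha)
  exact hP.2.2.1 hxC (ha C I hP) hxa

lemma q_nonadj_B {x b : V} (hx : x ∈ questioning G) (hb : b ∈ alwaysIndep G) :
    ¬ G.Adj x b := by
  obtain ⟨C, I, hP, hxI⟩ := hx.2
  have hxb : x ≠ b := fun h => q_not_B hx (h ▸ hb)
  exact hP.2.2.2 hxI (hb C I hP) hxb

lemma A_adj_A (hs : IsSplit G) {a a' : V} (ha : a ∈ alwaysClique G) (ha' : a' ∈ alwaysClique G)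
    (hne : a ≠ a') : G.Adj a a' := by
  obtain ⟨C, I, hP⟩ := hs
  exact hP.2.2.1 (ha C I hP) (ha' C I hP) hne

lemma B_nonadj_B (hs : IsSplit G) {b b' : V} (hb : b ∈ alwaysIndep G)
    (hb' : b' ∈ alwaysIndep G) (hne : b ≠ b') : ¬ G.Adj b b' := by
  obtain ⟨C, I, hP⟩ := hs
  exact hP.2.2.2 (hb C I hP) (hb' C I hP) hne

lemma QA_clique (hs : IsSplit G) (hcl : (questioning G).Pairwise G.Adj) :
    G.IsClique (questioning G ∪ alwaysClique G) := by
  rintro u (hu | hu) v (hv | hv) huv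
  · exact hcl hu hv huv
  · exact q_adj_A hu hv
  · exact (q_adj_A hv hu).symm
  · exact A_adj_A hs hu hv huv

lemma A_has_B_neighbor (hs : IsSplit G) (hcl : (questioning G).Pairwise G.Adj)
    {a : V} (ha : a ∈ alwaysClique G) :
    ∃ b ∈ alwaysIndep G, G.Adj a b := by
  by_contra h
  push_neg at h
  have hP' : IsSplitPartition G ((questioning G ∪ alwaysClique G) \ {a})
      (alwaysIndep G ∪ {a}) := by
    refine ⟨?_, ?_, (QA_clique hs hcl).subset Set.diff_subset, ?_⟩
    · rw [Set.disjoint_left]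
      rintro v ⟨hvC, hva⟩ (hvB | hva')
      · rcases hvC with hvQ | hvA
        · exact q_not_B hvQ hvB
        · exact A_not_B hs hvA hvB
      · exact hva hva'
    · apply Set.eq_univ_of_forall
      intro v
      by_cases hva : v = a
      · exact Or.inr (Or.inr hva)
      rcases mem_three hs v with h | h | h
      · exact Or.inl ⟨Or.inl h, hva⟩
      · exact Or.inl ⟨Or.inr h, hva⟩
      · exact Or.inr (Or.inl h)
    · rintro u (hu | hu) v (hv | hv) huv
      · obtain ⟨C, I, hP⟩ := hs
        exact hP.2.2.2 (hu C I hP) (hv C I hP) huv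
      · rw [Set.mem_singleton_iff] at hv; subst hv
        exact fun hadj => h u hu hadj.symm
      · rw [Set.mem_singleton_iff] at hu; subst hu
        exact h v hv
      · rw [Set.mem_singleton_iff] at hu hv; exact absurd (hu.trans hv.symm) huv
  exact not_both hP' (ha _ _ hP') (Or.inr rfl)

lemma isSplitPartition_compl {C I : Set V} (h : IsSplitPartition G C I) :
    IsSplitPartition Gᶜ I C := by
  refine ⟨h.1.symm, by rw [Set.union_comm]; exact h.2.1, ?_, ?_⟩
  · intro u hu v hv huv
    exact ⟨huv, h.2.2.2 hu hv huv⟩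
  · intro u hu v hv huv hadj
    rw [SimpleGraph.compl_adj] at hadj
    exact hadj.2 (h.2.2.1 hu hv huv)

lemma isSplitPartition_compl_iff {C I : Set V} :
    IsSplitPartition Gᶜ C I ↔ IsSplitPartition G I C := by
  constructor
  · intro h
    have := isSplitPartition_compl h
    rwa [compl_compl] at this
  · exact fun h => isSplitPartition_compl h

lemma questioning_compl : questioning Gᶜ = questioning G := by
  ext v
  constructor
  · rintro ⟨⟨C, I, hP, hv⟩, ⟨C', I', hP', hv'⟩⟩
    rw [isSplitPartition_compl_iff] at hP hP'
    exact ⟨⟨I', C', hP', hv'⟩, ⟨I, C, hP, hv⟩⟩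
  · rintro ⟨⟨C, I, hP, hv⟩, ⟨C', I', hP', hv'⟩⟩
    exact ⟨⟨I', C', isSplitPartition_compl hP', hv'⟩, ⟨I, C, isSplitPartition_compl hP, hv⟩⟩

lemma isSplit_compl (hs : IsSplit G) : IsSplit Gᶜ := by
  obtain ⟨C, I, hP⟩ := hs
  exact ⟨I, C, isSplitPartition_compl hP⟩

section mk
open Finset
variable [Fintype V] [DecidableEq V]

def mkG (Q A : Finset V) (f : V → Finset V) : SimpleGraph V where
  Adj u v := u ≠ v ∧ (((u ∈ Q ∨ u ∈ A) ∧ (v ∈ Q ∨ v ∈ A)) ∨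
    (u ∈ A ∧ v ∈ f u) ∨ (v ∈ A ∧ u ∈ f v))
  symm := by
    refine ⟨?_⟩
    rintro u v ⟨h1, h2⟩
    exact ⟨h1.symm, by tauto⟩
  loopless := ⟨fun v h => h.1 rfl⟩

variable {Q A : Finset V} {f : V → Finset V}

/-- Validity of the data. -/
def Valid (Q A : Finset V) (f : V → Finset V) : Prop :=
  2 ≤ Q.card ∧ Disjoint Q A ∧ (∀ a ∈ A, f a ⊆ Qᶜ \ A ∧ f a ≠ ∅) ∧ ∀ v ∉ A, f v = ∅

lemma mkG_adj {u v : V} : (mkG Q A f).Adj u v ↔ u ≠ v ∧ (((u ∈ Q ∨ u ∈ A) ∧ (v ∈ Q ∨ v ∈ A)) ∨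
    (u ∈ A ∧ v ∈ f u) ∨ (v ∈ A ∧ u ∈ f v)) := Iff.rfl

lemma mkG_base_partition (hv : Valid Q A f) :
    IsSplitPartition (mkG Q A f) ↑(Q ∪ A) ↑((Q ∪ A)ᶜ) := by
  refine ⟨?_, ?_, ?_, ?_⟩
  · rw [Finset.coe_compl, Set.disjoint_compl_right_iff_subset]
  · rw [Finset.coe_compl, Set.union_compl_self]
  · intro u hu v hv huv
    rw [Finset.mem_coe, Finset.mem_union] at hu hv
    exact ⟨huv, Or.inl ⟨hu, hv⟩⟩
  · intro u hu v hvv huv hadj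
    rw [Finset.mem_coe, Finset.mem_compl, Finset.mem_union] at hu hvv
    push_neg at hu hvv
    rcases hadj.2 with h | h | h
    · exact hu.1 (h.1.resolve_right hu.2)
    · exact hu.2 h.1
    · exact hvv.2 h.1

lemma mkG_split (hv : Valid Q A f) : IsSplit (mkG Q A f) :=
  ⟨_, _, mkG_base_partition hv⟩

/-- In any split partition of `mkG`, some element of `Q` lies in the clique part. -/
lemma mkG_exists_Q_in_C (hv : Valid Q A f) {C I : Set V}
    (hP : IsSplitPartition (mkG Q A f) C I) : ∃ x ∈ Q, x ∈ C := by
  obtain ⟨x, hxQ, y, hyQ, hxy⟩ := Finset.one_lt_card.1 hv.1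
  by_contra h
  push_neg at h
  have hxI : x ∈ I := (mem_C_or_I hP x).resolve_left (h x hxQ)
  have hyI : y ∈ I := (mem_C_or_I hP y).resolve_left (h y hyQ)
  exact hP.2.2.2 hxI hyI hxy ⟨hxy, Or.inl ⟨Or.inl hxQ, Or.inl hyQ⟩⟩

lemma mkG_outside_in_I (hv : Valid Q A f) {C I : Set V}
    (hP : IsSplitPartition (mkG Q A f) C I) {b : V} (hbQ : b ∉ Q) (hbA : b ∉ A) :
    b ∈ I := by
  rcases mem_C_or_I hP b with hbC | hbI
  · exfalso
    obtain ⟨x, hxQ, hxC⟩ := mkG_exists_Q_in_C hv hP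
    have hxb : x ≠ b := fun h => hbQ (h ▸ hxQ)
    have hadj := hP.2.2.1 hxC hbC hxb
    have hxA : x ∉ A := Finset.disjoint_left.1 hv.2.1 hxQ
    rcases hadj.2 with h | h | h
    · exact absurd h.2 (by simp [hbQ, hbA])
    · exact hxA h.1
    · exact hbA h.1
  · exact hbI

lemma mkG_A_in_C (hv : Valid Q A f) {C I : Set V}
    (hP : IsSplitPartition (mkG Q A f) C I) {a : V} (ha : a ∈ A) : a ∈ C := by
  rcases mem_C_or_I hP a with haC | haI
  · exact haC
  exfalso
  obtain ⟨hsub, hne⟩ := hv.2.2.1 a ha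
  obtain ⟨b, hb⟩ := Finset.nonempty_iff_ne_empty.2 hne
  have hbR := hsub hb
  rw [Finset.mem_sdiff, Finset.mem_compl] at hbR
  have hbI : b ∈ I := mkG_outside_in_I hv hP hbR.1 hbR.2
  have hab : a ≠ b := fun h => hbR.2 (h ▸ ha)
  exact hP.2.2.2 haI hbI hab ⟨hab, Or.inr (Or.inl ⟨ha, hb⟩)⟩

lemma mkG_questioning (hv : Valid Q A f) : questioning (mkG Q A f) = ↑Q := by
  ext x
  constructor
  · rintro ⟨⟨C, I, hP, hxC⟩, ⟨C', I', hP', hxI'⟩⟩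
    by_contra hxQ
    rw [Finset.mem_coe] at hxQ
    by_cases hxA : x ∈ A
    · exact not_both hP' (mkG_A_in_C hv hP' hxA) hxI'
    · exact not_both hP hxC (mkG_outside_in_I hv hP hxQ hxA)
  · intro hxQ
    rw [Finset.mem_coe] at hxQ
    have hxQA : x ∈ Q ∪ A := Finset.mem_union_left _ hxQ
    have hxA : x ∉ A := Finset.disjoint_left.1 hv.2.1 hxQ
    refine ⟨⟨_, _, mkG_base_partition hv, by exact_mod_cast hxQA⟩, ?_⟩
    -- second partition: move x to the independent side
    refine ⟨↑((Q ∪ A).erase x), ↑((Q ∪ A)ᶜ) ∪ {x}, ⟨?_, ?_, ?_, ?_⟩, Or.inr rfl⟩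
    · rw [Set.disjoint_left]
      rintro v hvC (hvI | hvx)
      · rw [Finset.mem_coe, Finset.mem_erase] at hvC
        rw [Finset.mem_coe, Finset.mem_compl] at hvI
        exact hvI hvC.2
      · rw [Finset.mem_coe, Finset.mem_erase] at hvC
        exact hvC.1 hvx
    · apply Set.eq_univ_of_forall
      intro v
      by_cases hvx : v = x
      · exact Or.inr (Or.inr hvx)
      by_cases hvQA : v ∈ Q ∪ A
      · exact Or.inl (by rw [Finset.mem_coe, Finset.mem_erase]; exact ⟨hvx, hvQA⟩)
      · exact Or.inr (Or.inl (by rwa [Finset.mem_coe, Finset.mem_compl]))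
    · intro u hu v hvv huv
      rw [Finset.mem_coe, Finset.mem_erase, Finset.mem_union] at hu hvv
      exact ⟨huv, Or.inl ⟨hu.2, hvv.2⟩⟩
    · -- independence of ↑(Q∪A)ᶜ ∪ {x}
      have hx_nonadj : ∀ v : V, v ∉ Q → v ∉ A → ¬ (mkG Q A f).Adj x v := by
        intro v hvQ hvA hadj
        rcases hadj.2 with h | h | h
        · exact absurd h.2 (by simp [hvQ, hvA])
        · exact hxA h.1
        · exact hvA h.1
      rintro u (hu | hu) v (hv | hv) huv hadj
      · rw [Finset.mem_coe, Finset.mem_compl, Finset.mem_union] at hu hv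
        push_neg at hu hv
        rcases hadj.2 with h | h | h
        · exact hu.1 (h.1.resolve_right hu.2)
        · exact hu.2 h.1
        · exact hv.2 h.1
      · rw [Set.mem_singleton_iff] at hv; subst hv
        rw [Finset.mem_coe, Finset.mem_compl, Finset.mem_union] at hu
        push_neg at hu
        exact hx_nonadj u hu.1 hu.2 hadj.symm
      · rw [Set.mem_singleton_iff] at hu; subst hu
        rw [Finset.mem_coe, Finset.mem_compl, Finset.mem_union] at hv
        push_neg at hv
        exact hx_nonadj v hv.1 hv.2 hadj
      · rw [Set.mem_singleton_iff] at hu hv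
        exact huv (hu.trans hv.symm)

lemma mkG_alwaysClique (hv : Valid Q A f) : alwaysClique (mkG Q A f) = ↑A := by
  ext a
  constructor
  · intro ha
    have h1 := ha _ _ (mkG_base_partition hv)
    rw [Finset.mem_coe, Finset.mem_union] at h1
    rcases h1 with hQ | hA
    · exfalso
      have : a ∈ questioning (mkG Q A f) := by
        rw [mkG_questioning hv]; exact hQ
      exact q_not_A this ha
    · exact hA
  · intro ha C I hP
    exact mkG_A_in_C hv hP (by exact_mod_cast ha)

lemma mkG_inj {Q' A' : Finset V} {f' : V → Finset V} (hv : Valid Q A f) (hv' : Valid Q' A' f')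
    (h : mkG Q A f = mkG Q' A' f') : Q = Q' ∧ A = A' ∧ f = f' := by
  have hQ : Q = Q' := by
    have := mkG_questioning hv
    rw [h, mkG_questioning hv'] at this
    exact_mod_cast Finset.coe_injective this.symm
  have hA : A = A' := by
    have := mkG_alwaysClique hv
    rw [h, mkG_alwaysClique hv'] at this
    exact_mod_cast Finset.coe_injective this.symm
  subst hQ hA
  refine ⟨rfl, rfl, funext fun v => ?_⟩
  by_cases hvA : v ∈ A
  · have hchar : ∀ g : V → Finset V, Valid Q A g →
        ∀ b, b ∈ g v ↔ ((mkG Q A g).Adj v b ∧ b ∉ Q ∧ b ∉ A) := by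
      intro g hg b
      constructor
      · intro hb
        have hbR := (hg.2.2.1 v hvA).1 hb
        rw [Finset.mem_sdiff, Finset.mem_compl] at hbR
        have hne : v ≠ b := fun hvb => hbR.2 (hvb ▸ hvA)
        exact ⟨⟨hne, Or.inr (Or.inl ⟨hvA, hb⟩)⟩, hbR.1, hbR.2⟩
      · rintro ⟨hadj, hbQ, hbA⟩
        rcases hadj.2 with hcase | hcase | hcase
        · exact absurd hcase.2 (by simp [hbQ, hbA])
        · exact hcase.2
        · exact absurd hcase.1 hbA
    ext b
    rw [hchar f hv b, hchar f' hv' b, h]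
  · rw [hv.2.2.2 v hvA, hv'.2.2.2 v hvA]

lemma exists_mkG_data (hs : IsSplit G) (hcl : (questioning G).Pairwise G.Adj)
    (h2 : 2 ≤ (questioning G).ncard) :
    ∃ (Q A : Finset V) (f : V → Finset V), Valid Q A f ∧ G = mkG Q A f := by
  classical
  set Qf : Finset V := (Set.toFinite (questioning G)).toFinset with hQf
  set Af : Finset V := (Set.toFinite (alwaysClique G)).toFinset with hAf
  set ff : V → Finset V := fun v =>
    if v ∈ Af then (Set.toFinite {b | b ∈ alwaysIndep G ∧ G.Adj v b}).toFinset else ∅ with hff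
  have hmemQ : ∀ v, v ∈ Qf ↔ v ∈ questioning G := fun v => Set.Finite.mem_toFinset _
  have hmemA : ∀ v, v ∈ Af ↔ v ∈ alwaysClique G := fun v => Set.Finite.mem_toFinset _
  have hmemf : ∀ a ∈ Af, ∀ b, b ∈ ff a ↔ (b ∈ alwaysIndep G ∧ G.Adj a b) := by
    intro a ha b
    rw [hff]
    simp only [if_pos ha]
    exact Set.Finite.mem_toFinset _
  have hval : Valid Qf Af ff := by
    refine ⟨?_, ?_, ?_, ?_⟩
    · have : (questioning G).ncard = Qf.card := by
        rw [hQf, Set.ncard_eq_toFinset_card]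
      omega
    · rw [Finset.disjoint_left]
      intro v hv hvA
      exact q_not_A ((hmemQ v).1 hv) ((hmemA v).1 hvA)
    · intro a ha
      constructor
      · intro b hb
        obtain ⟨hbB, _⟩ := (hmemf a ha b).1 hb
        rw [Finset.mem_sdiff, Finset.mem_compl, hmemQ, hmemA]
        exact ⟨fun h => q_not_B h hbB, fun h => A_not_B hs h hbB⟩
      · obtain ⟨b, hbB, hadj⟩ := A_has_B_neighbor hs hcl ((hmemA a).1 ha)
        rw [← Finset.nonempty_iff_ne_empty]
        exact ⟨b, (hmemf a ha b).2 ⟨hbB, hadj⟩⟩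
    · intro v hv
      rw [hff]; simp only [if_neg hv]
  refine ⟨Qf, Af, ff, hval, ?_⟩
  ext u v
  rw [mkG_adj]
  constructor
  · intro hadj
    refine ⟨hadj.ne, ?_⟩
    rcases mem_three hs u with hu | hu | hu <;> rcases mem_three hs v with hv | hv | hv
    · exact Or.inl ⟨Or.inl ((hmemQ u).2 hu), Or.inl ((hmemQ v).2 hv)⟩
    · exact Or.inl ⟨Or.inl ((hmemQ u).2 hu), Or.inr ((hmemA v).2 hv)⟩
    · exact absurd hadj (q_nonadj_B hu hv)
    · exact Or.inl ⟨Or.inr ((hmemA u).2 hu), Or.inl ((hmemQ v).2 hv)⟩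
    · exact Or.inl ⟨Or.inr ((hmemA u).2 hu), Or.inr ((hmemA v).2 hv)⟩
    · have huA := (hmemA u).2 hu
      exact Or.inr (Or.inl ⟨huA, (hmemf u huA v).2 ⟨hv, hadj⟩⟩)
    · exact absurd hadj.symm (q_nonadj_B hv hu)
    · have hvA := (hmemA v).2 hv
      exact Or.inr (Or.inr ⟨hvA, (hmemf v hvA u).2 ⟨hu, hadj.symm⟩⟩)
    · exact absurd hadj (B_nonadj_B hs hu hv hadj.ne)
  · rintro ⟨hne, hcase | hcase | hcase⟩
    · have hu : u ∈ questioning G ∪ alwaysClique G := by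
        rcases hcase.1 with h | h
        · exact Or.inl ((hmemQ u).1 h)
        · exact Or.inr ((hmemA u).1 h)
      have hv : v ∈ questioning G ∪ alwaysClique G := by
        rcases hcase.2 with h | h
        · exact Or.inl ((hmemQ v).1 h)
        · exact Or.inr ((hmemA v).1 h)
      exact QA_clique hs hcl hu hv hne
    · exact ((hmemf u hcase.1 v).1 hcase.2).2
    · exact ((hmemf v hcase.1 u).1 hcase.2).2.symm

lemma mkG_Q_adj (hv : Valid Q A f) {x y : V} (hx : x ∈ Q) (hy : y ∈ Q) (hxy : x ≠ y) :
    (mkG Q A f).Adj x y :=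
  ⟨hxy, Or.inl ⟨Or.inl hx, Or.inl hy⟩⟩

variable (V)

abbrev DT := Σ _Q : Finset V, Σ _A : Finset V, (V → Finset V)

def DF : Finset (DT V) :=
  (Finset.univ.filter fun Q : Finset V => 2 ≤ Q.card).sigma fun Q =>
    (Qᶜ.powerset).sigma fun A =>
      Fintype.piFinset fun v => if v ∈ A then (Qᶜ \ A).powerset.erase ∅ else {∅}

def enc : Bool × DT V → SimpleGraph V :=
  fun p => cond p.1 (mkG p.2.1 p.2.2.1 p.2.2.2) (mkG p.2.1 p.2.2.1 p.2.2.2)ᶜ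

variable {V}

lemma mem_DF_iff {d : DT V} : d ∈ DF V ↔
    (2 ≤ d.1.card ∧ d.2.1 ⊆ d.1ᶜ ∧
      ∀ v, d.2.2 v ∈ (if v ∈ d.2.1 then (d.1ᶜ \ d.2.1).powerset.erase ∅ else {∅})) := by
  obtain ⟨Q, A, f⟩ := d
  rw [DF, Finset.mem_sigma, Finset.mem_sigma, Finset.mem_filter, Finset.mem_powerset,
    Fintype.mem_piFinset]
  exact ⟨fun h => ⟨h.1.2, h.2.1, h.2.2⟩, fun h => ⟨⟨Finset.mem_univ _, h.1⟩, h.2.1, h.2.2⟩⟩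

lemma DF_valid {d : DT V} (hd : d ∈ DF V) : Valid d.1 d.2.1 d.2.2 := by
  rw [mem_DF_iff] at hd
  obtain ⟨h1, h2, h3⟩ := hd
  refine ⟨h1, ?_, ?_, ?_⟩
  · rw [Finset.disjoint_left]
    intro x hx hxA
    exact (Finset.mem_compl.1 (h2 hxA)) hx
  · intro a ha
    have := h3 a
    rw [if_pos ha, Finset.mem_erase, Finset.mem_powerset] at this
    exact ⟨this.2, this.1⟩
  · intro v hv
    have := h3 v
    rwa [if_neg hv, Finset.mem_singleton] at this

lemma valid_mem_DF {d : DT V} (hd : Valid d.1 d.2.1 d.2.2) : d ∈ DF V := by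
  rw [mem_DF_iff]
  refine ⟨hd.1, ?_, ?_⟩
  · intro x hx
    exact Finset.mem_compl.2 (Finset.disjoint_right.1 hd.2.1 hx)
  · intro v
    by_cases hv : v ∈ d.2.1
    · rw [if_pos hv, Finset.mem_erase, Finset.mem_powerset]
      exact ⟨(hd.2.2.1 v hv).2, (hd.2.2.1 v hv).1⟩
    · rw [if_neg hv, Finset.mem_singleton]
      exact hd.2.2.2 v hv

lemma enc_mem {p : Bool × DT V} (hp : p.2 ∈ DF V) :
    IsSplit (enc V p) ∧ 2 ≤ (questioning (enc V p)).ncard := by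
  have hval := DF_valid hp
  have hQ : questioning (mkG p.2.1 p.2.2.1 p.2.2.2) = ↑p.2.1 := mkG_questioning hval
  have hcard : 2 ≤ (questioning (mkG p.2.1 p.2.2.1 p.2.2.2)).ncard := by
    rw [hQ, Set.ncard_coe_finset]; exact hval.1
  obtain ⟨b, d⟩ := p
  cases b with
  | true =>
    exact ⟨mkG_split hval, hcard⟩
  | false =>
    refine ⟨isSplit_compl (mkG_split hval), ?_⟩
    show 2 ≤ (questioning (mkG d.1 d.2.1 d.2.2)ᶜ).ncard
    rw [questioning_compl]
    exact hcard

lemma enc_inj : Set.InjOn (enc V) ↑((Finset.univ : Finset Bool) ×ˢ DF V) := by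
  intro p hp p' hp' heq
  rw [Finset.coe_product, Set.mem_prod] at hp hp'
  have hd := DF_valid hp.2
  have hd' := DF_valid hp'.2
  obtain ⟨b, Q, A, f⟩ := p
  obtain ⟨b', Q', A', f'⟩ := p'
  have key : ∀ (Q₁ A₁ : Finset V) (f₁ : V → Finset V) (Q₂ A₂ : Finset V) (f₂ : V → Finset V),
      Valid Q₁ A₁ f₁ → Valid Q₂ A₂ f₂ → mkG Q₁ A₁ f₁ ≠ (mkG Q₂ A₂ f₂)ᶜ := by
    intro Q₁ A₁ f₁ Q₂ A₂ f₂ h₁ h₂ heq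
    obtain ⟨x, hxQ, y, hyQ, hxy⟩ := Finset.one_lt_card.1 h₁.1
    have hQeq : (↑Q₁ : Set V) = ↑Q₂ := by
      have e1 := mkG_questioning h₁
      have e2 := mkG_questioning h₂
      rw [heq] at e1
      rw [questioning_compl] at e1
      rw [e2] at e1
      exact e1.symm
    have hxQ2 : x ∈ Q₂ := by
      have : (x : V) ∈ (↑Q₂ : Set V) := hQeq ▸ (Finset.mem_coe.2 hxQ)
      exact_mod_cast this
    have hyQ2 : y ∈ Q₂ := by
      have : (y : V) ∈ (↑Q₂ : Set V) := hQeq ▸ (Finset.mem_coe.2 hyQ)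
      exact_mod_cast this
    have hadj1 : (mkG Q₁ A₁ f₁).Adj x y := mkG_Q_adj h₁ hxQ hyQ hxy
    have hadj2 : (mkG Q₂ A₂ f₂).Adj x y := mkG_Q_adj h₂ hxQ2 hyQ2 hxy
    rw [heq, SimpleGraph.compl_adj] at hadj1
    exact hadj1.2 hadj2
  cases b <;> cases b'
  · -- false false
    simp only [enc, cond_false] at heq
    have : mkG Q A f = mkG Q' A' f' := by
      rw [← compl_compl (mkG Q A f), heq, compl_compl]
    obtain ⟨e1, e2, e3⟩ := mkG_inj hd hd' this
    subst e1; subst e2; subst e3; rfl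
  · -- false true : mkG' = (mkG)ᶜ
    simp only [enc, cond_false, cond_true] at heq
    exact absurd heq.symm (key Q' A' f' Q A f hd' hd)
  · simp only [enc, cond_true, cond_false] at heq
    exact absurd heq (key Q A f Q' A' f' hd hd')
  · simp only [enc, cond_true] at heq
    obtain ⟨e1, e2, e3⟩ := mkG_inj hd hd' heq
    subst e1; subst e2; subst e3; rfl

lemma enc_surj :
    {G : SimpleGraph V | IsSplit G ∧ 2 ≤ (questioning G).ncard} ⊆
      enc V '' ↑((Finset.univ : Finset Bool) ×ˢ DF V) := by
  rintro G ⟨hs, h2⟩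
  rcases clique_or_indep G with hcl | hind
  · obtain ⟨Q, A, f, hval, hG⟩ := exists_mkG_data hs hcl h2
    refine ⟨(true, ⟨Q, A, f⟩), ?_, hG.symm⟩
    rw [Finset.mem_coe, Finset.mem_product]
    exact ⟨Finset.mem_univ _, valid_mem_DF hval⟩
  · have hs' : IsSplit Gᶜ := isSplit_compl hs
    have hcl' : (questioning Gᶜ).Pairwise Gᶜ.Adj := by
      rw [questioning_compl]
      intro u hu v hv huv
      exact ⟨huv, hind hu hv huv⟩
    have h2' : 2 ≤ (questioning Gᶜ).ncard := by rwa [questioning_compl]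
    obtain ⟨Q, A, f, hval, hG⟩ := exists_mkG_data hs' hcl' h2'
    refine ⟨(false, ⟨Q, A, f⟩), ?_, ?_⟩
    · rw [Finset.mem_coe, Finset.mem_product]
      exact ⟨Finset.mem_univ _, valid_mem_DF hval⟩
    · show (mkG Q A f)ᶜ = G
      rw [← hG, compl_compl]

lemma card_DF :
    (DF V).card = ∑ q ∈ Finset.Icc 2 (Fintype.card V),
      ∑ c ∈ Finset.range (Fintype.card V - q + 1),
        Nat.choose (Fintype.card V) q * Nat.choose (Fintype.card V - q) c *
          (2 ^ (Fintype.card V - c - q) - 1) ^ c := by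
  set n := Fintype.card V with hn
  rw [DF, Finset.card_sigma]
  have hQterm : ∀ Q : Finset V,
      ((Qᶜ.powerset).sigma fun A => Fintype.piFinset fun v =>
        if v ∈ A then (Qᶜ \ A).powerset.erase ∅ else ({∅} : Finset (Finset V))).card
      = ∑ c ∈ Finset.range (n - Q.card + 1),
          Nat.choose (n - Q.card) c * (2 ^ (n - Q.card - c) - 1) ^ c := by
    intro Q
    rw [Finset.card_sigma]
    have hC : Qᶜ.card = n - Q.card := Finset.card_compl Q
    calc ∑ A ∈ Qᶜ.powerset, (Fintype.piFinset fun v =>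
            if v ∈ A then (Qᶜ \ A).powerset.erase ∅ else ({∅} : Finset (Finset V))).card
        = ∑ A ∈ Qᶜ.powerset, (2 ^ (Qᶜ.card - A.card) - 1) ^ A.card := by
          refine Finset.sum_congr rfl fun A hA => ?_
          rw [Finset.mem_powerset] at hA
          rw [Fintype.card_piFinset]
          have hcards : ∀ v : V,
              ((if v ∈ A then (Qᶜ \ A).powerset.erase ∅ else ({∅} : Finset (Finset V)))).card
              = if v ∈ A then 2 ^ (Qᶜ.card - A.card) - 1 else 1 := by
            intro v
            by_cases hv : v ∈ A
            · rw [if_pos hv, if_pos hv, Finset.card_erase_of_mem (Finset.empty_mem_powerset _),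
                Finset.card_powerset, Finset.card_sdiff_of_subset hA]
            · rw [if_neg hv, if_neg hv, Finset.card_singleton]
          rw [Finset.prod_congr rfl fun v _ => hcards v, Finset.prod_ite_mem,
            Finset.univ_inter, Finset.prod_const]
      _ = ∑ c ∈ Finset.range (Qᶜ.card + 1), ∑ A ∈ Finset.powersetCard c Qᶜ,
            (2 ^ (Qᶜ.card - A.card) - 1) ^ A.card := Finset.sum_powerset _ _
      _ = ∑ c ∈ Finset.range (Qᶜ.card + 1),
            Nat.choose Qᶜ.card c * (2 ^ (Qᶜ.card - c) - 1) ^ c := by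
          refine Finset.sum_congr rfl fun c _ => ?_
          rw [Finset.sum_congr rfl (fun A hA => by
            rw [(Finset.mem_powersetCard.1 hA).2]), Finset.sum_const, smul_eq_mul,
            Finset.card_powersetCard]
      _ = ∑ c ∈ Finset.range (n - Q.card + 1),
            Nat.choose (n - Q.card) c * (2 ^ (n - Q.card - c) - 1) ^ c := by rw [hC]
  rw [Finset.sum_congr rfl fun Q _ => hQterm Q]
  have hfilter : (Finset.univ.filter fun Q : Finset V => 2 ≤ Q.card) =
      Finset.univ.powerset.filter fun Q : Finset V => 2 ≤ Q.card := by
    rw [Finset.powerset_univ]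
  rw [hfilter, Finset.sum_filter, Finset.sum_powerset]
  have hcu : (Finset.univ : Finset V).card = n := Finset.card_univ
  calc ∑ j ∈ Finset.range ((Finset.univ : Finset V).card + 1),
          ∑ Q ∈ Finset.powersetCard j Finset.univ,
            (if 2 ≤ Q.card then ∑ c ∈ Finset.range (n - Q.card + 1),
              Nat.choose (n - Q.card) c * (2 ^ (n - Q.card - c) - 1) ^ c else 0)
      = ∑ j ∈ Finset.range (n + 1), (if 2 ≤ j then Nat.choose n j *
          ∑ c ∈ Finset.range (n - j + 1),
            Nat.choose (n - j) c * (2 ^ (n - j - c) - 1) ^ c else 0) := by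
        rw [hcu]
        refine Finset.sum_congr rfl fun j _ => ?_
        rw [Finset.sum_congr rfl (fun Q hQ => by
          rw [(Finset.mem_powersetCard.1 hQ).2]), Finset.sum_const, smul_eq_mul,
          Finset.card_powersetCard, hcu]
        by_cases hj : 2 ≤ j
        · rw [if_pos hj, if_pos hj]
        · rw [if_neg hj, if_neg hj, Nat.mul_zero]
    _ = ∑ j ∈ (Finset.range (n + 1)).filter (fun j => 2 ≤ j), Nat.choose n j *
          ∑ c ∈ Finset.range (n - j + 1),
            Nat.choose (n - j) c * (2 ^ (n - j - c) - 1) ^ c := (Finset.sum_filter _ _).symm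
    _ = ∑ q ∈ Finset.Icc 2 n, Nat.choose n q *
          ∑ c ∈ Finset.range (n - q + 1),
            Nat.choose (n - q) c * (2 ^ (n - q - c) - 1) ^ c := by
        refine Finset.sum_congr ?_ fun _ _ => rfl
        ext j
        simp only [Finset.mem_filter, Finset.mem_range, Finset.mem_Icc]
        omega
    _ = ∑ q ∈ Finset.Icc 2 n, ∑ c ∈ Finset.range (n - q + 1),
          Nat.choose n q * Nat.choose (n - q) c * (2 ^ (n - c - q) - 1) ^ c := by
        refine Finset.sum_congr rfl fun q _ => ?_
        rw [Finset.mul_sum]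
        refine Finset.sum_congr rfl fun c _ => ?_
        rw [← Nat.mul_assoc, Nat.sub_right_comm]

end mk
end CountSplit

/-- For every positive integer `n`, the number of split graphs with vertex
set `{1,…,n}` whose questioning set has size at least 2 equals
`2 · ∑_{q=2}^{n} ∑_{c=0}^{n−q} C(n,q) · C(n−q,c) · (2^{n−c−q} − 1)^c`
(with the convention `0^0 = 1`, as in `ℕ`). -/
theorem count_split_questioning_ge_two (n : ℕ) (hn : 1 ≤ n) :
    Set.ncard {G : SimpleGraph (Fin n) | IsSplit G ∧ 2 ≤ (questioning G).ncard} =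
      2 * ∑ q ∈ Finset.Icc 2 n, ∑ c ∈ Finset.range (n - q + 1),
        Nat.choose n q * Nat.choose (n - q) c * (2 ^ (n - c - q) - 1) ^ c := by
  classical
  have himg : CountSplit.enc (Fin n) '' ↑((Finset.univ : Finset Bool) ×ˢ CountSplit.DF (Fin n))
      = {G : SimpleGraph (Fin n) | IsSplit G ∧ 2 ≤ (questioning G).ncard} := by
    apply Set.Subset.antisymm
    · rintro G ⟨p, hp, rfl⟩
      rw [Finset.mem_coe, Finset.mem_product] at hp
      exact CountSplit.enc_mem hp.2
    · exact CountSplit.enc_surj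
  rw [← himg, Set.ncard_image_of_injOn CountSplit.enc_inj, Set.ncard_coe_finset,
    Finset.card_product, Finset.card_univ, Fintype.card_bool, CountSplit.card_DF,
    Fintype.card_fin]
end

section
/- Let G be a split graph whose questioning set Q satisfies |Q| ≤ 1, with always-clique set C and always-independent set I. Then every vertex in C has a neighbor in I, and every vertex in I has a non-neighbor in C. -/
lemma mem_C_or_I {V : Type*} {G : SimpleGraph V} {C I : Set V}
    (h : IsSplitPartition G C I) (v : V) : v ∈ C ∨ v ∈ I := by
  have := h.2.1
  have : v ∈ C ∪ I := by rw [this]; trivial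
  exact this

lemma mem_indep_part {V : Type*} {G : SimpleGraph V} {C I : Set V}
    (hCI : IsSplitPartition G C I) {u : V} (hu : u ∈ I) :
    u ∈ alwaysIndep G ∨ u ∈ questioning G := by
  by_cases h : u ∈ alwaysIndep G
  · exact Or.inl h
  · right
    simp only [alwaysIndep, Set.mem_setOf_eq, not_forall] at h
    obtain ⟨C', I', hP, hnot⟩ := h
    exact ⟨⟨C', I', hP, (mem_C_or_I hP u).resolve_right hnot⟩, ⟨C, I, hCI, hu⟩⟩

lemma mem_clique_part {V : Type*} {G : SimpleGraph V} {C I : Set V}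
    (hCI : IsSplitPartition G C I) {u : V} (hu : u ∈ C) :
    u ∈ alwaysClique G ∨ u ∈ questioning G := by
  by_cases h : u ∈ alwaysClique G
  · exact Or.inl h
  · right
    simp only [alwaysClique, Set.mem_setOf_eq, not_forall] at h
    obtain ⟨C', I', hP, hnot⟩ := h
    exact ⟨⟨C, I, hCI, hu⟩, ⟨C', I', hP, (mem_C_or_I hP u).resolve_left hnot⟩⟩

lemma moveToI {V : Type*} {G : SimpleGraph V} {C I : Set V}
    (h : IsSplitPartition G C I) {v : V} (hv : v ∈ C)
    (hnadj : ∀ u ∈ I, ¬ G.Adj v u) :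
    IsSplitPartition G (C \ {v}) (insert v I) := by
  obtain ⟨hd, hu, hc, hi⟩ := h
  refine ⟨?_, ?_, hc.subset Set.diff_subset, ?_⟩
  · refine Set.disjoint_left.mpr ?_
    rintro a ⟨haC, hav⟩ (rfl | haI)
    · exact hav rfl
    · exact Set.disjoint_left.mp hd haC haI
  · rw [Set.eq_univ_iff_forall]
    intro x
    rcases eq_or_ne x v with rfl | hx
    · exact Or.inr (Set.mem_insert _ _)
    · rcases mem_C_or_I ⟨hd, hu, hc, hi⟩ x with hxc | hxi
      · exact Or.inl ⟨hxc, hx⟩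
      · exact Or.inr (Set.mem_insert_of_mem _ hxi)
  · intro a ha b hb hab
    rcases ha with rfl | ha <;> rcases hb with rfl | hb
    · exact absurd rfl hab
    · exact hnadj b hb
    · exact fun hadj => hnadj a ha hadj.symm
    · exact hi ha hb hab

lemma moveToC {V : Type*} {G : SimpleGraph V} {C I : Set V}
    (h : IsSplitPartition G C I) {v : V} (hv : v ∈ I)
    (hadj : ∀ u ∈ C, G.Adj v u) :
    IsSplitPartition G (insert v C) (I \ {v}) := by
  obtain ⟨hd, hu, hc, hi⟩ := h
  refine ⟨?_, ?_, ?_, fun a ha b hb hab => hi ha.1 hb.1 hab⟩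
  · refine Set.disjoint_left.mpr ?_
    rintro a (rfl | haC) ⟨haI, hav⟩
    · exact hav rfl
    · exact Set.disjoint_left.mp hd haC haI
  · rw [Set.eq_univ_iff_forall]
    intro x
    rcases eq_or_ne x v with rfl | hx
    · exact Or.inl (Set.mem_insert _ _)
    · rcases mem_C_or_I ⟨hd, hu, hc, hi⟩ x with hxc | hxi
      · exact Or.inl (Set.mem_insert_of_mem _ hxc)
      · exact Or.inr ⟨hxi, hx⟩
  · intro a ha b hb hab
    rcases ha with rfl | ha <;> rcases hb with rfl | hb
    · exact absurd rfl hab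
    · exact hadj b hb
    · exact (hadj a ha).symm
    · exact hc ha hb hab

/-- Let `G` be a split graph whose questioning set has at most one element.
Then every vertex of the always-clique set `C` has a neighbor in the always-independent set
`I`, and every vertex of `I` has a non-neighbor in `C`. -/
theorem neighbor_exists_of_questioning_small {V : Type*} [Fintype V] (G : SimpleGraph V)
    (hG : IsSplit G) (hQ : (questioning G).ncard ≤ 1) :
    (∀ v ∈ alwaysClique G, ∃ u ∈ alwaysIndep G, G.Adj v u) ∧
    (∀ v ∈ alwaysIndep G, ∃ u ∈ alwaysClique G, ¬ G.Adj v u) := by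
  have hQone : ∀ a ∈ questioning G, ∀ b ∈ questioning G, a = b := by
    intro a ha b hb
    exact ((Set.ncard_le_one (Set.toFinite _)).mp hQ) a ha b hb
  obtain ⟨C, I, hCI⟩ := hG
  constructor
  · intro v hv
    by_contra hcon
    push_neg at hcon
    -- find a partition (C', I') such that v has no neighbor in I'
    have key : ∃ C' I' : Set V, IsSplitPartition G C' I' ∧ ∀ u ∈ I', ¬ G.Adj v u := by
      by_cases hn : ∃ q ∈ I, G.Adj v q
      · obtain ⟨q, hqI, hqadj⟩ := hn
        have hqQ : q ∈ questioning G :=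
          (mem_indep_part hCI hqI).resolve_left (fun h => hcon q h hqadj)
        obtain ⟨C', I', hP, hqC'⟩ := hqQ.1
        refine ⟨C', I', hP, fun u hu hadj => ?_⟩
        rcases mem_indep_part hP hu with h | h
        · exact hcon u h hadj
        · have : u = q := hQone u h q hqQ
          subst this
          exact hP.1.ne_of_mem hqC' hu rfl
      · push_neg at hn
        exact ⟨C, I, hCI, hn⟩
    obtain ⟨C', I', hP, hno⟩ := key
    have hvC' : v ∈ C' := hv C' I' hP
    have := hv _ _ (moveToI hP hvC' hno)
    exact this.2 rfl
  · intro v hv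
    by_contra hcon
    push_neg at hcon
    have key : ∃ C' I' : Set V, IsSplitPartition G C' I' ∧ ∀ u ∈ C', G.Adj v u := by
      by_cases hn : ∃ q ∈ C, ¬ G.Adj v q
      · obtain ⟨q, hqC, hqnadj⟩ := hn
        have hqQ : q ∈ questioning G :=
          (mem_clique_part hCI hqC).resolve_left (fun h => hqnadj (hcon q h))
        obtain ⟨C', I', hP, hqI'⟩ := hqQ.2
        refine ⟨C', I', hP, fun u hu => ?_⟩
        rcases mem_clique_part hP hu with h | h
        · exact hcon u h
        · have : u = q := hQone u h q hqQ
          subst this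
          exact absurd rfl (hP.1.ne_of_mem hu hqI')
      · push_neg at hn
        exact ⟨C, I, hCI, hn⟩
    obtain ⟨C', I', hP, hall⟩ := key
    have hvI' : v ∈ I' := hv C' I' hP
    have := hv _ _ (moveToC hP hvI' hall)
    exact this.2 rfl
end
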